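/- arXiv:math/9907031 — 2 statements merged into one kernel-verified Lean document; each statement's English description precedes it below -/
import Mathlib

section
/- Let (g, d, [·,·]) be a differential graded Lie algebra over a field k of characteristic zero, η : g → g a linear map of degree −1, μₙ the maps of Theorem 3.1, and R a local Artin k-algebra with maximal ideal m. Suppose Γ ∈ (g⊗m)¹ satisfies the L∞ Maurer–Cartan equation Σ_{k≥1} ((−1)^{k(k+1)/2}/k!) μₖ(Γ,…,Γ) = 0. Then the Γ-deformed differential d_Γ defined by d_Γ(v) := −Σ_{k≥1} ((−1)^{k(k+1)/2}/(k−1)!) μₖ(Γ,…,Γ,v) = dv + μ₂(Γ,v) − (1/2!)μ₃(Γ,Γ,v) − (1/3!)μ₄(Γ,Γ,Γ,v) + … satisfies d_Γ ∘ d_Γ = 0 on g⊗m. -/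
open Finset
open scoped TensorProduct

noncomputable section

/-- The Koszul sign `e(σ; v₁,…,vₙ)` of a permutation `σ` with respect to the (integer)
degrees `deg i` of homogeneous elements, defined by
`v_{σ(1)} ∧ … ∧ v_{σ(n)} = (-1)^σ e(σ) v₁ ∧ … ∧ vₙ`. -/
def koszulSign (k : Type*) [Field k] {n : ℕ} (deg : Fin n → ℤ) (σ : Equiv.Perm (Fin n)) : k :=
  ∏ p ∈ Finset.univ.filter (fun p : Fin n × Fin n => p.1 < p.2 ∧ σ p.2 < σ p.1),
    (-1 : k) ^ (deg (σ p.1) * deg (σ p.2))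

/-- The sign `(-1)^σ` of a permutation, as an element of the field `k`. -/
def permSign (k : Type*) [Field k] {n : ℕ} (σ : Equiv.Perm (Fin n)) : k :=
  ((Equiv.Perm.sign σ : ℤ) : k)

/-- `Sh(p,n)`: the permutations of `{0,…,n-1}` that are strictly increasing on the first `p`
positions and on the remaining `n - p` positions. -/
def shuffles (p n : ℕ) : Finset (Equiv.Perm (Fin n)) :=
  Finset.univ.filter fun σ =>
    (∀ a b : Fin n, (a : ℕ) < (b : ℕ) → (b : ℕ) < p → σ a < σ b) ∧
    (∀ a b : Fin n, (a : ℕ) < (b : ℕ) → p ≤ (a : ℕ) → σ a < σ b)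

/-- A differential graded Lie algebra over `k` on the carrier `V`, presented by its
(internal) ℤ-grading, differential `d` of degree `+1` and bracket of degree `0`,
satisfying graded antisymmetry, the graded Jacobi identity and the graded Leibniz rule. -/
structure GradedDGLA (k V : Type*) [Field k] [AddCommGroup V] [Module k V] where
  grade : ℤ → Submodule k V
  internal : DirectSum.IsInternal grade
  d : V →ₗ[k] V
  bracket : V →ₗ[k] V →ₗ[k] V
  d_grade : ∀ (i : ℤ) (v : V), v ∈ grade i → d v ∈ grade (i + 1)
  bracket_grade : ∀ (i j : ℤ) (x y : V), x ∈ grade i → y ∈ grade j →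
    bracket x y ∈ grade (i + j)
  d_sq : ∀ v : V, d (d v) = 0
  antisymm : ∀ (i j : ℤ) (x y : V), x ∈ grade i → y ∈ grade j →
    bracket x y = -((-1 : k) ^ (i * j) • bracket y x)
  jacobi : ∀ (i j l : ℤ) (x y z : V), x ∈ grade i → y ∈ grade j → z ∈ grade l →
    (-1 : k) ^ (i * l) • bracket (bracket x y) z
      + (-1 : k) ^ (j * i) • bracket (bracket y z) x
      + (-1 : k) ^ (l * j) • bracket (bracket z x) y = 0
  leibniz : ∀ (i : ℤ) (x y : V), x ∈ grade i →
    d (bracket x y) = bracket (d x) y + (-1 : k) ^ i • bracket x (d y)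

/-- The `L∞`-operations `μₙ` of Theorem 3.1, built from a differential `d`, a bracket `br`
and a degree `-1` operator `η`:  `μ₁ = d`, `μ₂ = (dη + ηd)[·,·]`, and for `n ≥ 3`
`μₙ(v₁,…,vₙ) = (-1)ⁿ ∑_{σ ∈ Sh(n-1,n)} (-1)^σ e(σ) η[μ_{n-1}(v_{σ(1)},…,v_{σ(n-1)}), v_{σ(n)}]`.
The arguments are homogeneous of degrees recorded in `deg`. -/
def muRec {k : Type*} [Field k] {W : Type*} [AddCommGroup W] [Module k W]
    (d : W →ₗ[k] W) (br : W →ₗ[k] W →ₗ[k] W) (η : W →ₗ[k] W) :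
    (n : ℕ) → (Fin n → ℤ) → (Fin n → W) → W
  | 0, _, _ => 0
  | 1, _, v => d (v 0)
  | 2, _, v => d (η (br (v 0) (v 1))) + η (d (br (v 0) (v 1)))
  | (n + 3), deg, v =>
      (-1 : k) ^ (n + 3) •
        ∑ σ ∈ shuffles (n + 2) (n + 3),
          (permSign k σ * koszulSign k deg σ) •
            η (br
                (muRec d br η (n + 2) (fun i => deg (σ i.castSucc))
                  (fun i => v (σ i.castSucc)))
                (v (σ (Fin.last (n + 2)))))

/-- The general right-hand side `∑_{k+l=n+1} ∑_{σ ∈ Sh(k,n)} (-1)^{σ + k(l-1)} e(σ)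
F_l(μ_k(v_{σ(1)},…,v_{σ(k)}), v_{σ(k+1)},…,v_{σ(n)})` appearing both in the higher Jacobi
identities (with `F = μ`) and in the `L∞`-morphism equations into an abelian dg Lie algebra. -/
def linfRHS (k : Type*) [Field k] {W : Type*} [AddCommGroup W] [Module k W]
    (μ F : (m : ℕ) → (Fin m → ℤ) → (Fin m → W) → W)
    (n : ℕ) (deg : Fin n → ℤ) (v : Fin n → W) : W :=
  ∑ p : Fin n, ∑ σ ∈ shuffles ((p : ℕ) + 1) n,
    (permSign k σ * (-1 : k) ^ (((p : ℕ) + 1) * (n - 1 - (p : ℕ))) * koszulSign k deg σ) •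
      F (n - (p : ℕ))
        (fun i =>
          if (i : ℕ) = 0 then
            (∑ j : Fin ((p : ℕ) + 1),
              deg (σ ⟨(j : ℕ), by have := j.isLt; have := p.isLt; omega⟩)) + 1 - ((p : ℕ) : ℤ)
          else
            deg (σ ⟨(p : ℕ) + (i : ℕ), by have := i.isLt; have := p.isLt; omega⟩))
        (fun i =>
          if (i : ℕ) = 0 then
            μ ((p : ℕ) + 1)
              (fun j => deg (σ ⟨(j : ℕ), by have := j.isLt; have := p.isLt; omega⟩))
              (fun j => v (σ ⟨(j : ℕ), by have := j.isLt; have := p.isLt; omega⟩))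
          else
            v (σ ⟨(p : ℕ) + (i : ℕ), by have := i.isLt; have := p.isLt; omega⟩))

/-- The `n`-th higher Jacobi expression `Φₙ` of a family `μ` of multilinear operations. -/
def higherJacobi (k : Type*) [Field k] {W : Type*} [AddCommGroup W] [Module k W]
    (μ : (m : ℕ) → (Fin m → ℤ) → (Fin m → W) → W)
    (n : ℕ) (deg : Fin n → ℤ) (v : Fin n → W) : W :=
  linfRHS k μ μ n deg v

/-- The bracket on `V ⊗[k] R` induced by a bracket on `V` and the multiplication of `R`:
`[x ⊗ a, y ⊗ b] = [x,y] ⊗ (a*b)`. -/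
def tensorBracket {k : Type*} [Field k] {V : Type*} [AddCommGroup V] [Module k V]
    {R : Type*} [CommRing R] [Algebra k R] (br : V →ₗ[k] V →ₗ[k] V) :
    (V ⊗[k] R) →ₗ[k] (V ⊗[k] R) →ₗ[k] (V ⊗[k] R) :=
  TensorProduct.curry
    ((TensorProduct.map (TensorProduct.lift br) (LinearMap.mul' k R)).comp
      (TensorProduct.tensorTensorTensorComm k V R V R).toLinearMap)

/-- The homogeneous piece `(g ⊗ m)ⁱ = gⁱ ⊗ m` of `V ⊗[k] R`: the image of `p ⊗ q` in
`V ⊗[k] R`, for a submodule `p ⊆ V` (a graded piece) and a `k`-submodule `q ⊆ R`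
(the maximal ideal). -/
def tensorGrade {k : Type*} [Field k] {V : Type*} [AddCommGroup V] [Module k V]
    {R : Type*} [CommRing R] [Algebra k R] (p : Submodule k V) (q : Submodule k R) :
    Submodule k (V ⊗[k] R) :=
  LinearMap.range (TensorProduct.map p.subtype q.subtype)

/-- The maximal ideal of a local `k`-algebra, viewed as a `k`-submodule. -/
def maxIdealSub (k : Type*) [Field k] (R : Type*) [CommRing R] [Algebra k R]
    [IsLocalRing R] : Submodule k R :=
  Submodule.restrictScalars k (IsLocalRing.maximalIdeal R)

/-- The coefficient `(-1)^{n(n+1)/2} / n!` of the `L∞` Maurer–Cartan equation. -/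
def mcCoeff (k : Type*) [Field k] (n : ℕ) : k :=
  (-1 : k) ^ (n * (n + 1) / 2) / (n.factorial : k)

/-- The `Γ`-deformed differential
`d_Γ(w) = -∑_{n≥1} ((-1)^{n(n+1)/2}/(n-1)!) μₙ(Γ,…,Γ,w)` (sum cut off at `N`, which is
enough as soon as `m^N = 0`), applied to a homogeneous element `w` of degree `j`. -/
def deformedDiff {k : Type*} [Field k] {W : Type*} [AddCommGroup W] [Module k W]
    (d : W →ₗ[k] W) (br : W →ₗ[k] W →ₗ[k] W) (η : W →ₗ[k] W)
    (Γ : W) (N : ℕ) (j : ℤ) (w : W) : W :=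
  -(∑ n ∈ Finset.Icc 1 N,
      ((-1 : k) ^ (n * (n + 1) / 2) / ((n - 1).factorial : k)) •
        muRec d br η n (fun i => if (i : ℕ) = n - 1 then j else 1)
          (fun i => if (i : ℕ) = n - 1 then w else Γ))

section Comb

variable {m : ℕ}

/-- The shuffle sending the last position to `t` and keeping the rest in order. -/
def sh (t : Fin (m+1)) : Equiv.Perm (Fin (m+1)) :=
  (finRotate (m+1)).trans (Fin.cycleRange t).symm

lemma sh_castSucc (t : Fin (m+1)) (i : Fin m) : sh t i.castSucc = t.succAbove i := by
  simp [sh, Equiv.trans_apply, Fin.coeSucc_eq_succ]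

lemma sh_last (t : Fin (m+1)) : sh t (Fin.last m) = t := by
  simp [sh, Equiv.trans_apply, finRotate_last]

lemma sh_injective : Function.Injective (sh (m := m)) := by
  intro a b h
  have := congrArg (fun σ : Equiv.Perm (Fin (m+1)) => σ (Fin.last m)) h
  simpa [sh_last] using this

lemma sign_sh (t : Fin (m+1)) :
    Equiv.Perm.sign (sh t) = (-1) ^ (m + (t : ℕ)) := by
  have : sh t = (Fin.cycleRange t).symm * finRotate (m+1) := rfl
  rw [this, Equiv.Perm.sign_mul, Equiv.Perm.sign_symm, Fin.sign_cycleRange, sign_finRotate,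
    pow_add, mul_comm, Nat.add_sub_cancel]

lemma sh_mem_shuffles (t : Fin (m+1)) : sh t ∈ shuffles m (m+1) := by
  simp only [shuffles, Finset.mem_filter, Finset.mem_univ, true_and]
  constructor
  · intro a b hab hb
    have ha' : (a : ℕ) < m := lt_trans hab hb
    have : a = Fin.castSucc ⟨a, ha'⟩ := by simp [Fin.ext_iff]
    rw [this]
    have : b = Fin.castSucc ⟨b, hb⟩ := by simp [Fin.ext_iff]
    rw [this]
    rw [sh_castSucc, sh_castSucc]
    exact Fin.strictMono_succAbove t (Fin.mk_lt_mk.2 hab)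
  · intro a b hab ha
    exfalso
    have := b.isLt
    omega

lemma shuffles_eq_image :
    shuffles m (m+1) = Finset.image sh Finset.univ := by
  apply Finset.ext
  intro σ
  simp only [Finset.mem_image, Finset.mem_univ, true_and]
  constructor
  · intro hσ
    simp only [shuffles, Finset.mem_filter, Finset.mem_univ, true_and] at hσ
    refine ⟨σ (Fin.last m), ?_⟩
    set t := σ (Fin.last m) with ht
    have key : ∀ i : Fin m, σ i.castSucc = t.succAbove i := by
      have hcard : (Finset.univ.erase t).card = m := by
        rw [Finset.card_erase_of_mem (Finset.mem_univ t)]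
        simp
      have h1 : ∀ i : Fin m, σ i.castSucc ∈ Finset.univ.erase t := by
        intro i
        refine Finset.mem_erase.2 ⟨?_, Finset.mem_univ _⟩
        intro h
        have := σ.injective h
        exact absurd (congrArg Fin.val this) (by simp [Fin.ext_iff]; omega)
      have h2 : ∀ i : Fin m, t.succAbove i ∈ Finset.univ.erase t := by
        intro i
        exact Finset.mem_erase.2 ⟨Fin.succAbove_ne t i, Finset.mem_univ _⟩
      have hm1 : StrictMono (fun i : Fin m => σ i.castSucc) := by
        intro a b hab
        exact hσ.1 a.castSucc b.castSucc (Fin.castSucc_lt_castSucc_iff.2 hab) b.isLt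
      have e1 := Finset.orderEmbOfFin_unique hcard h1 hm1
      have e2 := Finset.orderEmbOfFin_unique hcard h2 (Fin.strictMono_succAbove t)
      intro i
      rw [show σ i.castSucc = (fun i : Fin m => σ i.castSucc) i from rfl, e1, ← e2]
    apply Equiv.ext
    intro a
    induction a using Fin.lastCases with
    | last => rw [sh_last]
    | cast i => rw [sh_castSucc, key]
  · rintro ⟨t, rfl⟩
    exact sh_mem_shuffles t

end Comb

section Koszul

variable {m : ℕ} (k : Type*) [Field k]

lemma inversions_sh (t : Fin (m+1)) :
    Finset.univ.filter (fun p : Fin (m+1) × Fin (m+1) => p.1 < p.2 ∧ sh t p.2 < sh t p.1)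
      = Finset.image (fun a : Fin m => (Fin.castSucc a, Fin.last m))
          (Finset.univ.filter fun a : Fin m => (t : ℕ) ≤ (a : ℕ)) := by
  have hsh := sh_mem_shuffles t
  simp only [shuffles, Finset.mem_filter, Finset.mem_univ, true_and] at hsh
  apply Finset.ext
  rintro ⟨p1, p2⟩
  simp only [Finset.mem_filter, Finset.mem_univ, true_and, Finset.mem_image, Prod.mk.injEq]
  constructor
  · rintro ⟨h12, hinv⟩
    have hp2 : p2 = Fin.last m := by
      by_contra hne
      have : (p2 : ℕ) < m := by
        have := p2.isLt
        have : (p2 : ℕ) ≠ m := fun h => hne (Fin.ext h)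
        omega
      exact absurd (hsh.1 p1 p2 h12 this) (by exact fun h => absurd hinv (asymm h))
    subst hp2
    have hp1 : (p1 : ℕ) < m := h12
    have hval : sh t (Fin.castSucc ⟨p1, hp1⟩) = t.succAbove ⟨p1, hp1⟩ := sh_castSucc t _
    have hlt : t < sh t p1 := by
      rw [sh_last t] at hinv; exact hinv
    have htle : (t : ℕ) ≤ (p1 : ℕ) := by
      by_contra hcon
      push_neg at hcon
      have heq : sh t p1 = Fin.castSucc ⟨p1, hp1⟩ := by
        have h0 : p1 = Fin.castSucc ⟨p1, hp1⟩ := Fin.ext rfl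
        calc sh t p1 = sh t (Fin.castSucc ⟨p1, hp1⟩) := by rw [← h0]
        _ = t.succAbove ⟨p1, hp1⟩ := sh_castSucc t _
        _ = Fin.castSucc ⟨p1, hp1⟩ :=
            Fin.succAbove_of_castSucc_lt _ _ (by exact Fin.mk_lt_mk.2 hcon)
      rw [heq] at hlt
      have : (t : ℕ) < (p1 : ℕ) := hlt
      omega
    exact ⟨⟨p1, hp1⟩, htle, Fin.ext rfl, rfl⟩
  · rintro ⟨a, hta, rfl, rfl⟩
    refine ⟨Fin.castSucc_lt_last a, ?_⟩
    rw [sh_last, sh_castSucc, Fin.succAbove_of_le_castSucc _ _ (by simpa [Fin.le_iff_val_le_val] using hta)]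
    simp [Fin.lt_iff_val_lt_val]
    omega

lemma koszulSign_sh (deg : Fin (m+1) → ℤ) (t : Fin (m+1)) :
    koszulSign k deg (sh t)
      = ∏ a ∈ Finset.univ.filter (fun a : Fin m => (t : ℕ) ≤ (a : ℕ)),
          (-1 : k) ^ (deg (t.succAbove a) * deg t) := by
  rw [koszulSign, inversions_sh, Finset.prod_image]
  · apply Finset.prod_congr rfl
    intro a _
    rw [sh_castSucc, sh_last]
  · intro a _ b _ h
    exact Fin.castSucc_injective m (congrArg Prod.fst h)

end Koszul

section Coef

variable {m : ℕ} (k : Type*) [Field k]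

lemma succAbove_val (p : Fin (m+1)) (a : Fin m) :
    ((p.succAbove a) : ℕ) = if (a : ℕ) < (p : ℕ) then (a : ℕ) else (a : ℕ) + 1 := by
  rcases lt_or_ge (a.castSucc) p with h | h
  · rw [Fin.succAbove_of_castSucc_lt _ _ h, if_pos (by exact h)]
    simp
  · rw [Fin.succAbove_of_le_castSucc _ _ h, if_neg (by
      have : (p : ℕ) ≤ (a : ℕ) := h
      omega)]
    simp

lemma sh_last_eq_one : sh (Fin.last m) = 1 := by
  rw [sh, Fin.cycleRange_last]
  exact Equiv.self_trans_symm _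

lemma permSign_one : permSign k (1 : Equiv.Perm (Fin m)) = 1 := by
  simp [permSign]

lemma koszulSign_one (deg : Fin m → ℤ) : koszulSign k deg 1 = 1 := by
  rw [koszulSign]
  convert Finset.prod_empty
  apply Finset.ext
  rintro ⟨p1, p2⟩
  simp only [Finset.mem_filter, Finset.mem_univ, true_and, Finset.notMem_empty, iff_false,
    not_and, Equiv.Perm.coe_one, id_eq]
  intro h
  have h' : p1 < p2 ∧ p2 < p1 := (Finset.mem_filter.1 h).2
  exact asymm h'.1 h'.2

lemma permSign_sh (t : Fin (m+1)) :
    permSign k (sh t) = (-1 : k) ^ (m + (t : ℕ)) := by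
  rw [permSign, sign_sh]
  push_cast
  norm_num

/-- Degree pattern: all `1` except possibly position `n-1`, which is `i`. -/
def adeg (n : ℕ) (i : ℤ) : Fin n → ℤ := fun t => if (t : ℕ) = n - 1 then i else 1

lemma coef_sh (i : ℤ) (t : Fin (m+1)) (ht : (t : ℕ) < m) :
    permSign k (sh t) * koszulSign k (adeg (m+1) i) (sh t) = -(-1 : k) ^ i := by
  have hm : 1 ≤ m := Nat.pos_of_ne_zero (by omega)
  rw [permSign_sh, koszulSign_sh]
  have hdegt : adeg (m+1) i t = 1 := by
    rw [adeg, if_neg]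
    simpa using Nat.ne_of_lt ht
  set S := Finset.univ.filter (fun a : Fin m => (t : ℕ) ≤ (a : ℕ)) with hS
  have hprodc : ∀ a ∈ S, (-1 : k) ^ (adeg (m+1) i (t.succAbove a) * adeg (m+1) i t)
      = (if (a : ℕ) = m - 1 then (-1 : k) ^ i else -1) := by
    intro a ha
    have hta : (t : ℕ) ≤ (a : ℕ) := by
      simpa [hS] using ha
    have hval : ((t.succAbove a) : ℕ) = (a : ℕ) + 1 := by
      rw [succAbove_val, if_neg (by omega)]
    rw [hdegt, mul_one, adeg, hval]
    by_cases hc : (a : ℕ) + 1 = m + 1 - 1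
    · rw [if_pos hc, if_pos (by omega)]
    · rw [if_neg hc, if_neg (by omega), zpow_one]
  rw [Finset.prod_congr rfl hprodc]
  have hmem : (⟨m - 1, by omega⟩ : Fin m) ∈ S := by
    simp [hS]; omega
  rw [← Finset.mul_prod_erase S _ hmem, if_pos rfl]
  have herase : ∀ a ∈ S.erase ⟨m - 1, by omega⟩,
      (if (a : ℕ) = m - 1 then (-1 : k) ^ i else -1) = -1 := by
    intro a ha
    rw [if_neg]
    intro hc
    exact absurd (Fin.ext hc : a = ⟨m - 1, by omega⟩) (Finset.mem_erase.1 ha).1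
  rw [Finset.prod_congr rfl herase, Finset.prod_const]
  have hcardS : S.card = m - (t : ℕ) := by
    have : S = Finset.Ici (⟨t, ht⟩ : Fin m) := by
      apply Finset.ext
      intro a
      simp [hS, Finset.mem_Ici, Fin.le_iff_val_le_val]
    rw [this, Fin.card_Ici]
  rw [Finset.card_erase_of_mem hmem, hcardS]
  have hpow : (-1 : k) ^ (m + (t : ℕ)) * ((-1 : k) ^ i * (-1 : k) ^ (m - (t : ℕ) - 1))
      = -(-1 : k) ^ i := by
    have h2 : (-1 : k) ^ (m + (t : ℕ)) * (-1 : k) ^ (m - (t : ℕ) - 1) = -1 := by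
      rw [← pow_add]
      have : m + (t : ℕ) + (m - (t : ℕ) - 1) = 2 * (m - 1) + 1 := by omega
      rw [this, pow_succ, pow_mul]
      norm_num
    calc (-1 : k) ^ (m + (t : ℕ)) * ((-1 : k) ^ i * (-1 : k) ^ (m - (t : ℕ) - 1))
        = ((-1 : k) ^ (m + (t : ℕ)) * (-1 : k) ^ (m - (t : ℕ) - 1)) * (-1 : k) ^ i := by ring
      _ = -(-1 : k) ^ i := by rw [h2]; ring
  exact hpow

end Coef


section Rec

variable {k : Type*} [Field k] {W : Type*} [AddCommGroup W] [Module k W]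
variable (d : W →ₗ[k] W) (br : W →ₗ[k] W →ₗ[k] W) (η : W →ₗ[k] W) (Γ : W)

/-- Argument pattern: all `Γ` except possibly the last position, which is `x`. -/
def avec (Γ x : W) (n : ℕ) : Fin n → W := fun t => if (t : ℕ) = n - 1 then x else Γ

def AA (n : ℕ) (i : ℤ) (x : W) : W := muRec d br η n (adeg n i) (avec Γ x n)

def BB (n : ℕ) : W := muRec d br η n (fun _ => 1) (fun _ => Γ)

lemma muRec_eval (n : ℕ) (deg : Fin (n+3) → ℤ) (v : Fin (n+3) → W) :
    muRec d br η (n+3) deg v = (-1 : k) ^ (n+3) •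
      ∑ t : Fin (n+3),
        (permSign k (sh t) * koszulSign k deg (sh t)) •
          η (br
              (muRec d br η (n+2) (fun i => deg (sh t i.castSucc))
                (fun i => v (sh t i.castSucc)))
              (v (sh t (Fin.last (n+2))))) := by
  show (-1 : k) ^ (n + 3) • ∑ σ ∈ shuffles (n + 2) (n + 3), _ = _
  rw [show shuffles (n+2) (n+3) = Finset.image sh Finset.univ from shuffles_eq_image,
    Finset.sum_image (fun a _ b _ h => sh_injective h)]

lemma AA_rec (n : ℕ) (i : ℤ) (x : W) :
    AA d br η Γ (n+3) i x = (-1 : k) ^ (n+3) •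
      (η (br (BB d br η Γ (n+2)) x)
        + (((n+2 : ℕ) : k) * (-(-1 : k) ^ i)) • η (br (AA d br η Γ (n+2) i x) Γ)) := by
  rw [AA, muRec_eval, Fin.sum_univ_castSucc]
  congr 1
  have hterm : ∀ t : Fin (n+2),
      (permSign k (sh t.castSucc) * koszulSign k (adeg (n+3) i) (sh t.castSucc)) •
        η (br
            (muRec d br η (n+2) (fun a => adeg (n+3) i (sh t.castSucc a.castSucc))
              (fun a => avec Γ x (n+3) (sh t.castSucc a.castSucc)))
            (avec Γ x (n+3) (sh t.castSucc (Fin.last (n+2)))))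
      = (-(-1 : k) ^ i) • η (br (AA d br η Γ (n+2) i x) Γ) := by
    intro t
    have htv : ((t.castSucc : Fin (n+3)) : ℕ) < n + 2 := by simp
    have hdeg : (fun a : Fin (n+2) => adeg (n+3) i (sh t.castSucc a.castSucc))
        = adeg (n+2) i := by
      funext a
      rw [sh_castSucc]
      simp only [adeg]
      have hv := succAbove_val t.castSucc a
      have hcs : ((t.castSucc : Fin (n+3)) : ℕ) = (t : ℕ) := by simp
      rw [hcs] at hv
      have h1 := t.isLt
      have h2 := a.isLt
      split_ifs at hv ⊢ <;> omega
    have hvv : (fun a : Fin (n+2) => avec Γ x (n+3) (sh t.castSucc a.castSucc))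
        = avec Γ x (n+2) := by
      funext a
      rw [sh_castSucc]
      simp only [avec]
      have hv := succAbove_val t.castSucc a
      have hcs : ((t.castSucc : Fin (n+3)) : ℕ) = (t : ℕ) := by simp
      rw [hcs] at hv
      have h1 := t.isLt
      have h2 := a.isLt
      split_ifs at hv ⊢ <;> first | rfl | omega
    have hlastx : avec Γ x (n+3) (sh t.castSucc (Fin.last (n+2))) = Γ := by
      rw [sh_last, avec, if_neg (by simp; have := t.isLt; omega)]
    rw [hdeg, hvv, hlastx, coef_sh k i t.castSucc htv]
    rfl
  rw [Finset.sum_congr rfl (fun t _ => hterm t), Finset.sum_const, Finset.card_univ,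
    Fintype.card_fin]
  have hlastdeg : (fun a : Fin (n+2) => adeg (n+3) i (sh (Fin.last (n+2)) a.castSucc))
      = (fun _ => (1 : ℤ)) := by
    funext a
    rw [sh_last_eq_one]
    simp only [Equiv.Perm.coe_one, id_eq, adeg]
    exact if_neg (show ¬ ((a.castSucc : Fin (n+3)) : ℕ) = n + 3 - 1 by have := a.isLt; simp; omega)
  have hlastv : (fun a : Fin (n+2) => avec Γ x (n+3) (sh (Fin.last (n+2)) a.castSucc))
      = (fun _ => Γ) := by
    funext a
    rw [sh_last_eq_one]
    simp only [Equiv.Perm.coe_one, id_eq, avec]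
    exact if_neg (show ¬ ((a.castSucc : Fin (n+3)) : ℕ) = n + 3 - 1 by have := a.isLt; simp; omega)
  have hlast : (permSign k (sh (Fin.last (n+2))) * koszulSign k (adeg (n+3) i) (sh (Fin.last (n+2)))) •
      η (br
          (muRec d br η (n+2) (fun a => adeg (n+3) i (sh (Fin.last (n+2)) a.castSucc))
            (fun a => avec Γ x (n+3) (sh (Fin.last (n+2)) a.castSucc)))
          (avec Γ x (n+3) (sh (Fin.last (n+2)) (Fin.last (n+2)))))
      = η (br (BB d br η Γ (n+2)) x) := by
    rw [hlastdeg, hlastv, sh_last]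
    have havec : avec Γ x (n+3) (Fin.last (n+2)) = x := by
      rw [avec, if_pos (by simp)]
    rw [havec, sh_last_eq_one, permSign_one, koszulSign_one, one_mul, one_smul]
    rfl
  rw [hlast, add_comm]
  congr 1
  rw [← Nat.cast_smul_eq_nsmul k, smul_smul]

end Rec


section Abstract
set_option linter.unusedSectionVars false

variable {k : Type*} [Field k] [CharZero k] {W : Type*} [AddCommGroup W] [Module k W]
variable (d : W →ₗ[k] W) (br : W →ₗ[k] W →ₗ[k] W) (η : W →ₗ[k] W) (Γ : W)
variable (P : ℤ → Submodule k W) (Q : ℕ → Submodule k W) (N : ℕ)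

/-- All hypotheses of the abstract situation. -/
structure LHyp : Prop where
  dd : ∀ x : W, d (d x) = 0
  dP : ∀ (i : ℤ) (x : W), x ∈ P i → d x ∈ P (i+1)
  etaP : ∀ (i : ℤ) (x : W), x ∈ P i → η x ∈ P (i-1)
  brP : ∀ (i i' : ℤ) (x y : W), x ∈ P i → y ∈ P i' → br x y ∈ P (i+i')
  dQ : ∀ (s : ℕ) (x : W), x ∈ Q s → d x ∈ Q s
  etaQ : ∀ (s : ℕ) (x : W), x ∈ Q s → η x ∈ Q s
  brQ : ∀ (s t : ℕ) (x y : W), x ∈ Q s → y ∈ Q t → br x y ∈ Q (s+t)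
  Q0 : Q 0 = ⊤
  QN : Q N = ⊥
  anti : ∀ (i i' : ℤ) (x y : W), x ∈ P i → y ∈ P i' →
    br x y = -((-1 : k) ^ (i * i') • br y x)
  leib : ∀ (i : ℤ) (x y : W), x ∈ P i →
    d (br x y) = br (d x) y + (-1 : k) ^ i • br x (d y)
  gammaP : Γ ∈ P 1
  gammaQ : Γ ∈ Q 1
  N2 : 2 ≤ N
  MC : (∑ n ∈ Finset.Icc 1 N, mcCoeff k n • BB d br η Γ n) = 0

variable {d br η Γ P Q N}

lemma AA_zero (i : ℤ) (x : W) : AA d br η Γ 0 i x = 0 := rfl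

lemma AA_one (i : ℤ) (x : W) : AA d br η Γ 1 i x = d x := by
  show d (avec Γ x 1 0) = d x
  norm_num [avec]

lemma AA_two (i : ℤ) (x : W) :
    AA d br η Γ 2 i x = d (η (br Γ x)) + η (d (br Γ x)) := by
  show d (η (br (avec Γ x 2 0) (avec Γ x 2 1))) + η (d (br (avec Γ x 2 0) (avec Γ x 2 1))) = _
  norm_num [avec]

lemma BB_zero : BB d br η Γ 0 = 0 := rfl
lemma BB_one : BB d br η Γ 1 = d Γ := rfl
lemma BB_two : BB d br η Γ 2 = d (η (br Γ Γ)) + η (d (br Γ Γ)) := rfl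

lemma AA_one_self (n : ℕ) : AA d br η Γ n 1 Γ = BB d br η Γ n := by
  rw [AA, BB]
  congr 1
  · funext t; simp [adeg]
  · funext t; simp [avec]

lemma BB_rec (n : ℕ) :
    BB d br η Γ (n+3) = (((n+3 : ℕ) : k) * (-1 : k) ^ (n+3)) • η (br (BB d br η Γ (n+2)) Γ) := by
  rw [← AA_one_self, AA_rec, AA_one_self]
  match_scalars
  push_cast
  ring


section Mem

lemma mem_P_congr {i i' : ℤ} {x : W} (hi : i = i') (hx : x ∈ P i) : x ∈ P i' := hi ▸ hx

lemma mem_Q_congr {s s' : ℕ} {x : W} (hs : s = s') (hx : x ∈ Q s) : x ∈ Q s' := hs ▸ hx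

variable (h : LHyp d br η Γ P Q N)
include h

lemma BB_mem_P : ∀ n : ℕ, BB d br η Γ n ∈ P 2 := by
  intro n
  induction n with
  | zero => rw [BB_zero]; exact zero_mem _
  | succ m ih =>
    rcases m with _ | _ | l
    · rw [BB_one]
      exact mem_P_congr (by norm_num) (h.dP 1 Γ h.gammaP)
    · rw [BB_two]
      refine add_mem ?_ ?_
      · exact mem_P_congr (by norm_num)
          (h.dP _ _ (h.etaP _ _ (h.brP 1 1 Γ Γ h.gammaP h.gammaP)))
      · exact mem_P_congr (by norm_num)
          (h.etaP _ _ (h.dP _ _ (h.brP 1 1 Γ Γ h.gammaP h.gammaP)))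
    · rw [BB_rec]
      exact Submodule.smul_mem _ _ (mem_P_congr (by norm_num)
        (h.etaP _ _ (h.brP 2 1 _ Γ ih h.gammaP)))

lemma AA_mem_P {i : ℤ} {x : W} (hx : x ∈ P i) : ∀ n : ℕ, AA d br η Γ n i x ∈ P (i+1) := by
  intro n
  induction n with
  | zero => rw [AA_zero]; exact zero_mem _
  | succ m ih =>
    rcases m with _ | _ | l
    · rw [AA_one]; exact h.dP i x hx
    · rw [AA_two]
      refine add_mem ?_ ?_
      · exact mem_P_congr (by ring)
          (h.dP _ _ (h.etaP _ _ (h.brP 1 i Γ x h.gammaP hx)))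
      · exact mem_P_congr (by ring)
          (h.etaP _ _ (h.dP _ _ (h.brP 1 i Γ x h.gammaP hx)))
    · rw [AA_rec]
      refine Submodule.smul_mem _ _ (add_mem ?_ (Submodule.smul_mem _ _ ?_))
      · exact mem_P_congr (by ring) (h.etaP _ _ (h.brP 2 i _ x (BB_mem_P h _) hx))
      · exact mem_P_congr (by ring) (h.etaP _ _ (h.brP (i+1) 1 _ Γ ih h.gammaP))

lemma mem_Q_zero (x : W) : x ∈ Q 0 := by rw [h.Q0]; exact Submodule.mem_top

lemma BB_mem_Q : ∀ n : ℕ, BB d br η Γ n ∈ Q n := by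
  intro n
  induction n with
  | zero => rw [BB_zero]; exact zero_mem _
  | succ m ih =>
    rcases m with _ | _ | l
    · rw [BB_one]; exact h.dQ 1 Γ h.gammaQ
    · rw [BB_two]
      refine add_mem (h.dQ _ _ (h.etaQ _ _ ?_)) (h.etaQ _ _ (h.dQ _ _ ?_)) <;>
        exact h.brQ 1 1 Γ Γ h.gammaQ h.gammaQ
    · rw [BB_rec]
      exact Submodule.smul_mem _ _ (h.etaQ _ _ (h.brQ (l+2) 1 _ Γ ih h.gammaQ))

lemma AA_mem_Q (i : ℤ) (x : W) : ∀ n : ℕ, AA d br η Γ (n+1) i x ∈ Q n := by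
  intro n
  induction n with
  | zero => rw [AA_one]; exact h.dQ 0 x (mem_Q_zero h x)
  | succ m ih =>
    rcases m with _ | l
    · rw [AA_two]
      refine add_mem (h.dQ _ _ (h.etaQ _ _ ?_)) (h.etaQ _ _ (h.dQ _ _ ?_)) <;>
        exact mem_Q_congr (by norm_num) (h.brQ 1 0 Γ x h.gammaQ (mem_Q_zero h x))
    · rw [AA_rec]
      refine Submodule.smul_mem _ _ (add_mem ?_ (Submodule.smul_mem _ _ ?_))
      · exact mem_Q_congr (by omega) (h.etaQ _ _ (h.brQ (l+2) 0 _ x (BB_mem_Q h _) (mem_Q_zero h x)))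
      · exact mem_Q_congr (by omega) (h.etaQ _ _ (h.brQ (l+1) 1 _ Γ ih h.gammaQ))

end Mem

lemma AA_neg (i : ℤ) (x : W) : ∀ n : ℕ, AA d br η Γ n i (-x) = -AA d br η Γ n i x := by
  intro n
  induction n with
  | zero => rw [AA_zero, AA_zero, neg_zero]
  | succ m ih =>
    rcases m with _ | _ | l
    · rw [AA_one, AA_one, map_neg]
    · rw [AA_two, AA_two]; simp; abel
    · have ih' : AA d br η Γ (l+2) i (-x) = -AA d br η Γ (l+2) i x := ih
      rw [AA_rec, AA_rec, ih']
      simp [smul_add]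
      module


lemma sign_step (n : ℕ) :
    (-1 : k) ^ ((n+1)*(n+2)/2) = (-1 : k) ^ (n+1) * (-1 : k) ^ (n*(n+1)/2) := by
  have hq : (n+1)*(n+2)/2 = n*(n+1)/2 + (n+1) := by
    have h2 : (n+1)*(n+2) = n*(n+1) + 2*(n+1) := by ring
    obtain ⟨c, hc⟩ := Nat.even_mul_succ_self n
    rw [h2, hc]
    omega
  rw [hq, pow_add, mul_comm]

lemma term_rw (n : ℕ) (hn : 3 ≤ n) (i : ℤ) (x : W) :
    ((-1 : k) ^ (n*(n+1)/2) / ((n-1).factorial : k)) • AA d br η Γ n i x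
      = ((-1 : k) ^ ((n-1)*n/2) / ((n-1).factorial : k)) • η (br (BB d br η Γ (n-1)) x)
        - (-1 : k) ^ i •
            (((-1 : k) ^ ((n-1)*n/2) / ((n-2).factorial : k)) • η (br (AA d br η Γ (n-1) i x) Γ)) := by
  obtain ⟨p, rfl⟩ : ∃ p, n = p + 3 := ⟨n - 3, by omega⟩
  show ((-1 : k) ^ ((p+3)*(p+4)/2) / ((p+2).factorial : k)) • AA d br η Γ (p+3) i x
      = ((-1 : k) ^ ((p+2)*(p+3)/2) / ((p+2).factorial : k)) • η (br (BB d br η Γ (p+2)) x)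
        - (-1 : k) ^ i •
            (((-1 : k) ^ ((p+2)*(p+3)/2) / ((p+1).factorial : k)) • η (br (AA d br η Γ (p+2) i x) Γ))
  have hs : (-1 : k) ^ ((p+3)*(p+4)/2) = (-1 : k) ^ (p+3) * (-1 : k) ^ ((p+2)*(p+3)/2) :=
    sign_step (p+2)
  have h1 : (-1 : k) ^ (p+3) * (-1 : k) ^ (p+3) = 1 := by
    rw [← pow_add]
    exact Even.neg_one_pow ⟨p+3, by ring⟩
  have hfac : ((p+2).factorial : k) = ((p+2 : ℕ) : k) * ((p+1).factorial : k) := by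
    push_cast [Nat.factorial_succ]
    ring
  have hfne : ((p+1).factorial : k) ≠ 0 := Nat.cast_ne_zero.2 (Nat.factorial_ne_zero _)
  have hne2 : ((p+2 : ℕ) : k) ≠ 0 := Nat.cast_ne_zero.2 (by omega)
  rw [AA_rec, hs, smul_smul]
  have hco : (-1:k)^(p+3) * (-1:k)^((p+2)*(p+3)/2) / ((p+2).factorial : k) * (-1:k)^(p+3)
      = (-1:k)^((p+2)*(p+3)/2) / ((p+2).factorial : k) := by
    have hx : (-1:k)^(p+3) * (-1:k)^((p+2)*(p+3)/2) / ((p+2).factorial : k) * (-1:k)^(p+3)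
        = ((-1:k)^(p+3) * (-1:k)^(p+3)) * ((-1:k)^((p+2)*(p+3)/2) / ((p+2).factorial : k)) := by
      ring
    rw [hx, h1, one_mul]
  rw [hco, smul_add, smul_smul, sub_eq_add_neg]
  congr 1
  rw [smul_smul, ← neg_smul]
  congr 1
  rw [hfac]
  have hdiv : (-1:k)^((p+2)*(p+3)/2) / (((p+2:ℕ):k) * ((p+1).factorial : k)) * ((p+2:ℕ):k)
      = (-1:k)^((p+2)*(p+3)/2) / ((p+1).factorial : k) := by
    have hB : ((p : k) + 2) ≠ 0 := by
      have := hne2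
      push_cast at this
      exact this
    field_simp
  linear_combination (-(-1:k)^i) * hdiv

lemma key (h : LHyp d br η Γ P Q N) (i : ℤ) (x : W) (hx : x ∈ P i) :
    (∑ n ∈ Finset.Icc 1 N, ((-1 : k) ^ (n*(n+1)/2) / ((n-1).factorial : k)) • AA d br η Γ n i x)
      = -(d x) - d (η (br Γ x))
        - (-1 : k) ^ i • η (br
            (∑ n ∈ Finset.Icc 1 N, ((-1 : k) ^ (n*(n+1)/2) / ((n-1).factorial : k)) •
              AA d br η Γ n i x) Γ) := by
  set f : ℕ → W := fun n => ((-1 : k) ^ (n*(n+1)/2) / ((n-1).factorial : k)) • AA d br η Γ n i x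
    with hf
  set g1 : ℕ → W := fun m => ((-1 : k) ^ (m*(m+1)/2) / (m.factorial : k)) • η (br (BB d br η Γ m) x)
    with hg1
  set g2 : ℕ → W := fun m => ((-1 : k) ^ (m*(m+1)/2) / ((m-1).factorial : k)) •
      η (br (AA d br η Γ m i x) Γ) with hg2
  have htail : ∀ n ∈ Finset.Icc 3 N, f n = g1 (n-1) - (-1 : k) ^ i • g2 (n-1) := by
    intro n hn
    have hn3 : 3 ≤ n := (Finset.mem_Icc.1 hn).1
    simp only [hf, hg1, hg2]
    have hnn : (n-1) + 1 = n := by omega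
    rw [hnn, show n - 1 - 1 = n - 2 from by omega]
    exact term_rw n hn3 i x
  have hsplit : Finset.Icc 1 N = insert 1 (insert 2 (Finset.Icc 3 N)) := by
    ext a
    simp only [Finset.mem_Icc, Finset.mem_insert]
    have := h.N2
    omega
  have h1n : (1 : ℕ) ∉ insert 2 (Finset.Icc 3 N) := by simp [Finset.mem_Icc]
  have h2n : (2 : ℕ) ∉ Finset.Icc 3 N := by simp [Finset.mem_Icc]
  have hfsum : ∑ n ∈ Finset.Icc 1 N, f n
      = f 1 + f 2 + ∑ n ∈ Finset.Icc 3 N, f n := by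
    rw [hsplit, Finset.sum_insert h1n, Finset.sum_insert h2n, add_assoc]
  have hreindex : ∑ n ∈ Finset.Icc 3 N, f n
      = ∑ m ∈ Finset.Icc 2 (N-1), (g1 m - (-1 : k) ^ i • g2 m) := by
    rw [Finset.sum_congr rfl htail]
    have hmap : Finset.Icc 3 N = Finset.map (addRightEmbedding 1) (Finset.Icc 2 (N-1)) := by
      rw [Finset.map_add_right_Icc]
      congr 1
      · have := h.N2; omega
    rw [hmap, Finset.sum_map]
    apply Finset.sum_congr rfl
    intro m _
    simp [addRightEmbedding]
  have hf1 : f 1 = -(d x) := by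
    simp only [hf]
    rw [AA_one]
    norm_num [Nat.factorial]
  have hleib : η (d (br Γ x)) = η (br (d Γ) x) - (-1 : k) ^ i • η (br (d x) Γ) := by
    have hl := h.leib 1 Γ x h.gammaP
    have ha := h.anti 1 (i+1) Γ (d x) h.gammaP (h.dP i x hx)
    rw [one_mul] at ha
    have hzp : (-1 : k) ^ ((i : ℤ)+1) = -(-1 : k) ^ i := by
      rw [zpow_add₀ (by norm_num : (-1 : k) ≠ 0), zpow_one]
      ring
    rw [hzp] at ha
    rw [hl, ha, zpow_one]
    simp only [map_add, map_smul, map_neg, smul_neg, neg_smul]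
    module
  have hf2 : f 2 = -(d (η (br Γ x))) - η (br (d Γ) x) + (-1 : k) ^ i • η (br (d x) Γ) := by
    simp only [hf]
    rw [AA_two]
    norm_num [Nat.factorial]
    rw [hleib]
    module
  have hg1_1 : g1 1 = -η (br (d Γ) x) := by
    simp only [hg1]
    rw [BB_one]
    norm_num [Nat.factorial]
  have hg2_1 : g2 1 = -η (br (d x) Γ) := by
    simp only [hg2]
    rw [AA_one]
    norm_num [Nat.factorial]
  have h1mem : (1 : ℕ) ∉ Finset.Icc 2 (N-1) := by simp [Finset.mem_Icc]
  have hIccN : Finset.Icc 1 (N-1) = insert 1 (Finset.Icc 2 (N-1)) := by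
    ext a
    simp only [Finset.mem_Icc, Finset.mem_insert]
    have := h.N2
    omega
  have hNmem : N ∉ Finset.Icc 1 (N-1) := by
    simp only [Finset.mem_Icc, not_and]
    intro _
    have := h.N2
    omega
  have hIccfull : Finset.Icc 1 N = insert N (Finset.Icc 1 (N-1)) := by
    ext a
    simp only [Finset.mem_Icc, Finset.mem_insert]
    have := h.N2
    omega
  have hBN : BB d br η Γ N = 0 := by
    have hm := BB_mem_Q h N
    rw [h.QN, Submodule.mem_bot] at hm
    exact hm
  have hbrx : ∀ (S : Finset ℕ) (gf : ℕ → W),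
      η (br (∑ m ∈ S, gf m) x) = ∑ m ∈ S, η (br (gf m) x) := by
    intro S gf
    rw [map_sum, LinearMap.sum_apply, map_sum]
  have hbrΓ : ∀ (S : Finset ℕ) (gf : ℕ → W),
      η (br (∑ m ∈ S, gf m) Γ) = ∑ m ∈ S, η (br (gf m) Γ) := by
    intro S gf
    rw [map_sum, LinearMap.sum_apply, map_sum]
  have hg1sum : ∑ m ∈ Finset.Icc 1 (N-1), g1 m = 0 := by
    have hMC := h.MC
    rw [hIccfull, Finset.sum_insert hNmem] at hMC
    rw [hBN, smul_zero, zero_add] at hMC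
    have heq : ∑ m ∈ Finset.Icc 1 (N-1), g1 m
        = η (br (∑ m ∈ Finset.Icc 1 (N-1), mcCoeff k m • BB d br η Γ m) x) := by
      rw [hbrx]
      apply Finset.sum_congr rfl
      intro m _
      simp only [hg1, mcCoeff, map_smul, LinearMap.smul_apply]
    rw [heq, hMC]
    simp
  have hAAN : η (br (AA d br η Γ N i x) Γ) = 0 := by
    have hm : AA d br η Γ N i x ∈ Q (N-1) := by
      have := AA_mem_Q h i x (N-1)
      rwa [show N - 1 + 1 = N from by have := h.N2; omega] at this
    have hm2 : br (AA d br η Γ N i x) Γ ∈ Q N := by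
      have := h.brQ (N-1) 1 _ Γ hm h.gammaQ
      rwa [show N - 1 + 1 = N from by have := h.N2; omega] at this
    have hm3 := h.etaQ N _ hm2
    rw [h.QN, Submodule.mem_bot] at hm3
    exact hm3
  have hg2sum : η (br (∑ n ∈ Finset.Icc 1 N, f n) Γ)
      = ∑ m ∈ Finset.Icc 1 (N-1), g2 m := by
    rw [hbrΓ, hIccfull, Finset.sum_insert hNmem]
    have hfNterm : η (br (f N) Γ) = 0 := by
      simp only [hf, map_smul, LinearMap.smul_apply]
      rw [hAAN, smul_zero]
    rw [hfNterm, zero_add]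
    apply Finset.sum_congr rfl
    intro m _
    simp only [hf, hg2, map_smul, LinearMap.smul_apply]
  have e1 : ∑ m ∈ Finset.Icc 2 (N-1), g1 m = η (br (d Γ) x) := by
    have h0 := hg1sum
    rw [hIccN, Finset.sum_insert h1mem, hg1_1] at h0
    have h0' := add_eq_zero_iff_eq_neg.1 h0
    exact (neg_injective h0').symm
  have e2 : ∑ m ∈ Finset.Icc 2 (N-1), g2 m
      = η (br (∑ n ∈ Finset.Icc 1 N, f n) Γ) + η (br (d x) Γ) := by
    have h0 := hg2sum
    rw [hIccN, Finset.sum_insert h1mem, hg2_1] at h0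
    rw [h0]
    abel
  conv_lhs => rw [hfsum, hreindex, Finset.sum_sub_distrib, ← Finset.smul_sum, e1, e2, hf1, hf2]
  module


lemma abstract_main (h : LHyp d br η Γ P Q N) (j : ℤ) (x : W) (hx : x ∈ P j) :
    (∑ n ∈ Finset.Icc 1 N, ((-1 : k) ^ (n*(n+1)/2) / ((n-1).factorial : k)) •
        AA d br η Γ n (j+1)
          (∑ m ∈ Finset.Icc 1 N, ((-1 : k) ^ (m*(m+1)/2) / ((m-1).factorial : k)) •
            AA d br η Γ m j x)) = 0 := by
  set u : W := ∑ m ∈ Finset.Icc 1 N, ((-1 : k) ^ (m*(m+1)/2) / ((m-1).factorial : k)) •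
      AA d br η Γ m j x with hu_def
  have hu : u = -(d x) - d (η (br Γ x)) - (-1 : k) ^ j • η (br u Γ) := key h j x hx
  have huP : u ∈ P (j+1) := by
    rw [hu_def]
    exact Submodule.sum_mem _ fun m _ => Submodule.smul_mem _ _ (AA_mem_P h hx m)
  set X : W := ∑ n ∈ Finset.Icc 1 N, ((-1 : k) ^ (n*(n+1)/2) / ((n-1).factorial : k)) •
      AA d br η Γ n (j+1) u with hX_def
  have hX : X = -(d u) - d (η (br Γ u)) - (-1 : k) ^ (j+1) • η (br X Γ) := key h (j+1) u huP
  have hdu : d u = -((-1 : k) ^ j • d (η (br u Γ))) := by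
    conv_lhs => rw [hu]
    simp only [map_sub, map_neg, map_smul, h.dd, neg_zero, zero_sub]
  have hanti : br Γ u = (-1 : k) ^ j • br u Γ := by
    have ha := h.anti 1 (j+1) Γ u h.gammaP huP
    rw [one_mul] at ha
    have hzp : (-1 : k) ^ ((j : ℤ)+1) = -(-1 : k) ^ j := by
      rw [zpow_add₀ (by norm_num : (-1 : k) ≠ 0), zpow_one]
      ring
    rw [hzp] at ha
    rw [ha]
    simp
  have hzp : (-1 : k) ^ ((j : ℤ)+1) = -(-1 : k) ^ j := by
    rw [zpow_add₀ (by norm_num : (-1 : k) ≠ 0), zpow_one]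
    ring
  have hXeq : X = (-1 : k) ^ j • η (br X Γ) := by
    conv_lhs => rw [hX, hdu, hanti, hzp]
    simp only [map_smul]
    module
  have hstep : ∀ s : ℕ, X ∈ Q s → X ∈ Q (s+1) := by
    intro s hs
    rw [hXeq]
    exact Submodule.smul_mem _ _ (h.etaQ _ _ (h.brQ s 1 _ Γ hs h.gammaQ))
  have hall : ∀ s : ℕ, X ∈ Q s := by
    intro s
    induction s with
    | zero => rw [h.Q0]; exact Submodule.mem_top
    | succ t ih => exact hstep t ih
  have := hall N
  rw [h.QN, Submodule.mem_bot] at this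
  exact this

end Abstract


section Tensor

variable {k V : Type*} [Field k] [AddCommGroup V] [Module k V]
variable {R : Type*} [CommRing R] [Algebra k R]

lemma tensorBracket_tmul (br : V →ₗ[k] V →ₗ[k] V) (a b : V) (r s : R) :
    tensorBracket br (a ⊗ₜ[k] r) (b ⊗ₜ[k] s) = (br a b) ⊗ₜ[k] (r * s) := by
  simp [tensorBracket, TensorProduct.curry_apply, TensorProduct.tensorTensorTensorComm_tmul,
    TensorProduct.map_tmul, TensorProduct.lift.tmul, LinearMap.mul'_apply]

lemma mem_tensorGrade_tmul {p : Submodule k V} {q : Submodule k R} {a : V} {b : R}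
    (ha : a ∈ p) (hb : b ∈ q) : a ⊗ₜ[k] b ∈ tensorGrade p q :=
  ⟨(⟨a, ha⟩ : p) ⊗ₜ (⟨b, hb⟩ : q), by simp [TensorProduct.map_tmul]⟩

lemma tensorGrade_induction {p : Submodule k V} {q : Submodule k R} {x : V ⊗[k] R}
    (hx : x ∈ tensorGrade p q) {motive : V ⊗[k] R → Prop}
    (zero : motive 0)
    (tmul : ∀ a ∈ p, ∀ b ∈ q, motive (a ⊗ₜ[k] b))
    (add : ∀ y z, motive y → motive z → motive (y + z)) : motive x := by
  obtain ⟨z, rfl⟩ := hx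
  induction z using TensorProduct.induction_on with
  | zero => simpa using zero
  | tmul a b => simpa [TensorProduct.map_tmul] using tmul a a.2 b b.2
  | add y z hy hz => rw [map_add]; exact add _ _ hy hz

lemma tensorGrade_mono {p p' : Submodule k V} {q q' : Submodule k R}
    (hp : p ≤ p') (hq : q ≤ q') : tensorGrade p q ≤ tensorGrade p' q' := by
  intro x hx
  refine tensorGrade_induction hx (motive := fun x => x ∈ tensorGrade p' q') ?_ ?_ ?_
  · exact zero_mem _
  · intro a ha b hb
    exact mem_tensorGrade_tmul (hp ha) (hq hb)
  · intro y z hy hz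
    exact add_mem hy hz

lemma rTensor_mem_tensorGrade {f : V →ₗ[k] V} {p p' : Submodule k V} {q : Submodule k R}
    (hf : ∀ v ∈ p, f v ∈ p') {x : V ⊗[k] R} (hx : x ∈ tensorGrade p q) :
    f.rTensor R x ∈ tensorGrade p' q := by
  refine tensorGrade_induction hx (motive := fun x => f.rTensor R x ∈ tensorGrade p' q) ?_ ?_ ?_
  · rw [map_zero]; exact zero_mem _
  · intro a ha b hb
    rw [LinearMap.rTensor_tmul]
    exact mem_tensorGrade_tmul (hf a ha) hb
  · intro y z hy hz
    rw [map_add]; exact add_mem hy hz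

lemma tensorBracket_mem {br : V →ₗ[k] V →ₗ[k] V} {p p' p'' : Submodule k V}
    {q q' q'' : Submodule k R}
    (hbr : ∀ a ∈ p, ∀ b ∈ p', br a b ∈ p'') (hq : ∀ r ∈ q, ∀ s ∈ q', r * s ∈ q'')
    {x y : V ⊗[k] R} (hx : x ∈ tensorGrade p q) (hy : y ∈ tensorGrade p' q') :
    tensorBracket br x y ∈ tensorGrade p'' q'' := by
  refine tensorGrade_induction hx
    (motive := fun x => tensorBracket br x y ∈ tensorGrade p'' q'') ?_ ?_ ?_
  · rw [map_zero, LinearMap.zero_apply]; exact zero_mem _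
  · intro a ha b hb
    refine tensorGrade_induction hy
      (motive := fun y => tensorBracket br (a ⊗ₜ[k] b) y ∈ tensorGrade p'' q'') ?_ ?_ ?_
    · rw [map_zero]; exact zero_mem _
    · intro c hc e he
      rw [tensorBracket_tmul]
      exact mem_tensorGrade_tmul (hbr a ha c hc) (hq b hb e he)
    · intro y1 y2 h1 h2
      rw [map_add]; exact add_mem h1 h2
  · intro y1 y2 h1 h2
    rw [map_add, LinearMap.add_apply]; exact add_mem h1 h2

end Tensor


section Lift

variable {k V : Type*} [Field k] [AddCommGroup V] [Module k V]
variable {R : Type*} [CommRing R] [Algebra k R]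

lemma rTensor_d_sq (D : GradedDGLA k V) (x : V ⊗[k] R) :
    D.d.rTensor R (D.d.rTensor R x) = 0 := by
  rw [← LinearMap.comp_apply, ← LinearMap.rTensor_comp]
  have hdd : D.d.comp D.d = 0 := by
    apply LinearMap.ext
    intro v
    exact D.d_sq v
  rw [hdd, LinearMap.rTensor_zero, LinearMap.zero_apply]

lemma tensorBracket_anti (D : GradedDGLA k V) (i i' : ℤ) (x y : V ⊗[k] R)
    (hx : x ∈ tensorGrade (D.grade i) (⊤ : Submodule k R))
    (hy : y ∈ tensorGrade (D.grade i') (⊤ : Submodule k R)) :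
    tensorBracket D.bracket x y = -((-1 : k) ^ (i * i') • tensorBracket D.bracket y x) := by
  refine tensorGrade_induction hx (motive := fun x =>
    tensorBracket D.bracket x y = -((-1 : k) ^ (i * i') • tensorBracket D.bracket y x)) ?_ ?_ ?_
  · rw [map_zero, LinearMap.zero_apply, map_zero, smul_zero, neg_zero]
  · intro a ha b _
    refine tensorGrade_induction hy (motive := fun y =>
      tensorBracket D.bracket (a ⊗ₜ[k] b) y
        = -((-1 : k) ^ (i * i') • tensorBracket D.bracket y (a ⊗ₜ[k] b))) ?_ ?_ ?_
    · rw [map_zero, map_zero, LinearMap.zero_apply, smul_zero, neg_zero]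
    · intro c hc e _
      rw [tensorBracket_tmul, tensorBracket_tmul, D.antisymm i i' a c ha hc]
      rw [mul_comm e b]
      rw [TensorProduct.neg_tmul, TensorProduct.smul_tmul']
    · intro y1 y2 h1 h2
      rw [map_add, map_add, LinearMap.add_apply, h1, h2, smul_add, neg_add]
  · intro y1 y2 h1 h2
    rw [map_add, LinearMap.add_apply, h1, h2, map_add, smul_add, neg_add]

lemma tensorBracket_leibniz (D : GradedDGLA k V) (i : ℤ) (x y : V ⊗[k] R)
    (hx : x ∈ tensorGrade (D.grade i) (⊤ : Submodule k R)) :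
    D.d.rTensor R (tensorBracket D.bracket x y)
      = tensorBracket D.bracket (D.d.rTensor R x) y
        + (-1 : k) ^ i • tensorBracket D.bracket x (D.d.rTensor R y) := by
  refine tensorGrade_induction hx (motive := fun x =>
    D.d.rTensor R (tensorBracket D.bracket x y)
      = tensorBracket D.bracket (D.d.rTensor R x) y
        + (-1 : k) ^ i • tensorBracket D.bracket x (D.d.rTensor R y)) ?_ ?_ ?_
  · simp
  · intro a ha b _
    induction y using TensorProduct.induction_on with
    | zero =>
      simp
    | tmul c e =>
      rw [tensorBracket_tmul, LinearMap.rTensor_tmul, LinearMap.rTensor_tmul,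
        tensorBracket_tmul, LinearMap.rTensor_tmul, tensorBracket_tmul,
        D.leibniz i a c ha, TensorProduct.add_tmul, TensorProduct.smul_tmul']
    | add y1 y2 h1 h2 =>
      simp only [map_add]
      rw [h1, h2, smul_add]
      abel
  · intro y1 y2 h1 h2
    simp only [map_add, LinearMap.add_apply]
    rw [h1, h2, smul_add]
    abel

end Lift


theorem statement3 {k V : Type*} [Field k] [CharZero k] [AddCommGroup V] [Module k V]
    (D : GradedDGLA k V) (η : V →ₗ[k] V)
    (hη : ∀ (i : ℤ) (v : V), v ∈ D.grade i → η v ∈ D.grade (i - 1))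
    (R : Type*) [CommRing R] [Algebra k R] [IsLocalRing R] [IsArtinianRing R]
    (N : ℕ) (hN : IsLocalRing.maximalIdeal R ^ N = ⊥)
    (Γ : V ⊗[k] R) (hΓ : Γ ∈ tensorGrade (D.grade 1) (maxIdealSub k R))
    (hMC : (∑ n ∈ Finset.Icc 1 N, mcCoeff k n •
        muRec (LinearMap.rTensor R D.d) (tensorBracket D.bracket) (LinearMap.rTensor R η)
          n (fun _ => (1 : ℤ)) (fun _ => Γ)) = 0)
    (j : ℤ) (w : V ⊗[k] R) (hw : w ∈ tensorGrade (D.grade j) (maxIdealSub k R)) :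
    deformedDiff (LinearMap.rTensor R D.d) (tensorBracket D.bracket) (LinearMap.rTensor R η)
        Γ N (j + 1)
        (deformedDiff (LinearMap.rTensor R D.d) (tensorBracket D.bracket)
          (LinearMap.rTensor R η) Γ N j w) = 0 := by
  set d' : (V ⊗[k] R) →ₗ[k] (V ⊗[k] R) := LinearMap.rTensor R D.d with hd'
  set br' : (V ⊗[k] R) →ₗ[k] (V ⊗[k] R) →ₗ[k] (V ⊗[k] R) := tensorBracket D.bracket with hbr'
  set η' : (V ⊗[k] R) →ₗ[k] (V ⊗[k] R) := LinearMap.rTensor R η with hη'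
  rcases Nat.eq_zero_or_pos N with hN0 | hNpos
  · exfalso
    rw [hN0, pow_zero, Ideal.one_eq_top] at hN
    have h1 : (1 : R) ∈ (⊥ : Ideal R) := hN ▸ Submodule.mem_top
    rw [Submodule.mem_bot] at h1
    exact one_ne_zero h1
  by_cases hN1 : N = 1
  · subst hN1
    have hdone : ∀ (jj : ℤ) (ww : V ⊗[k] R), deformedDiff d' br' η' Γ 1 jj ww = d' ww := by
      intro jj ww
      show -(∑ n ∈ Finset.Icc 1 1, ((-1 : k) ^ (n*(n+1)/2) / ((n-1).factorial : k)) •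
          AA d' br' η' Γ n jj ww) = d' ww
      rw [Finset.Icc_self, Finset.sum_singleton, AA_one]
      norm_num [Nat.factorial]
    rw [hdone, hdone]
    exact rTensor_d_sq D w
  have hN2 : 2 ≤ N := by omega
  set P : ℤ → Submodule k (V ⊗[k] R) := fun i => tensorGrade (D.grade i) (⊤ : Submodule k R)
    with hP
  set Q : ℕ → Submodule k (V ⊗[k] R) := fun s =>
    tensorGrade (⊤ : Submodule k V)
      (Submodule.restrictScalars k (IsLocalRing.maximalIdeal R ^ s)) with hQ
  have h : LHyp d' br' η' Γ P Q N := by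
    refine ⟨rTensor_d_sq D, ?_, ?_, ?_, ?_, ?_, ?_, ?_, ?_, ?_, ?_, ?_, ?_, hN2, hMC⟩
    · exact fun i x hx => rTensor_mem_tensorGrade (fun v hv => D.d_grade i v hv) hx
    · exact fun i x hx => rTensor_mem_tensorGrade (fun v hv => hη i v hv) hx
    · exact fun i i' x y hx hy =>
        tensorBracket_mem (fun a ha b hb => D.bracket_grade i i' a b ha hb)
          (fun r _ s _ => Submodule.mem_top) hx hy
    · exact fun s x hx => rTensor_mem_tensorGrade (fun v _ => Submodule.mem_top) hx
    · exact fun s x hx => rTensor_mem_tensorGrade (fun v _ => Submodule.mem_top) hx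
    · intro s t x y hx hy
      refine tensorBracket_mem (fun a _ b _ => Submodule.mem_top) ?_ hx hy
      intro r hr s' hs'
      show r * s' ∈ IsLocalRing.maximalIdeal R ^ (s + t)
      rw [pow_add]
      exact Ideal.mul_mem_mul hr hs'
    · apply le_antisymm le_top
      rintro x -
      induction x using TensorProduct.induction_on with
      | zero => exact zero_mem _
      | tmul a r =>
        refine mem_tensorGrade_tmul Submodule.mem_top ?_
        show r ∈ IsLocalRing.maximalIdeal R ^ 0
        rw [pow_zero, Ideal.one_eq_top]
        trivial
      | add y z hy hz => exact add_mem hy hz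
    · apply le_antisymm ?_ bot_le
      intro x hx
      rw [Submodule.mem_bot]
      refine tensorGrade_induction hx (motive := fun x => x = 0) rfl ?_ ?_
      · intro a _ b hb
        have hb0 : b = 0 := by
          have : b ∈ IsLocalRing.maximalIdeal R ^ N := hb
          rw [hN] at this
          exact this
        rw [hb0, TensorProduct.tmul_zero]
      · intro y z hy hz
        rw [hy, hz, add_zero]
    · exact fun i i' x y hx hy => tensorBracket_anti D i i' x y hx hy
    · exact fun i x y hx => tensorBracket_leibniz D i x y hx
    · exact tensorGrade_mono le_rfl le_top hΓ
    · refine tensorGrade_mono le_top ?_ hΓ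
      intro r hr
      show r ∈ IsLocalRing.maximalIdeal R ^ 1
      rw [pow_one]
      exact hr
  have hwP : w ∈ P j := tensorGrade_mono le_rfl le_top hw
  have hkey := abstract_main h j w hwP
  show -(∑ n ∈ Finset.Icc 1 N, ((-1 : k) ^ (n*(n+1)/2) / ((n-1).factorial : k)) •
      AA d' br' η' Γ n (j+1) (deformedDiff d' br' η' Γ N j w)) = 0
  rw [neg_eq_zero]
  have hinner : deformedDiff d' br' η' Γ N j w
      = -(∑ m ∈ Finset.Icc 1 N, ((-1 : k) ^ (m*(m+1)/2) / ((m-1).factorial : k)) •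
          AA d' br' η' Γ m j w) := rfl
  rw [hinner]
  have hterm : ∀ n ∈ Finset.Icc 1 N,
      ((-1 : k) ^ (n*(n+1)/2) / ((n-1).factorial : k)) •
        AA d' br' η' Γ n (j+1)
          (-(∑ m ∈ Finset.Icc 1 N, ((-1 : k) ^ (m*(m+1)/2) / ((m-1).factorial : k)) •
            AA d' br' η' Γ m j w))
      = -(((-1 : k) ^ (n*(n+1)/2) / ((n-1).factorial : k)) •
          AA d' br' η' Γ n (j+1)
            (∑ m ∈ Finset.Icc 1 N, ((-1 : k) ^ (m*(m+1)/2) / ((m-1).factorial : k)) •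
              AA d' br' η' Γ m j w)) := by
    intro n _
    rw [AA_neg, smul_neg]
  rw [Finset.sum_congr rfl hterm, Finset.sum_neg_distrib, hkey, neg_zero]
end
end

section
/- Let (g, d, [·,·]) be a differential graded Lie algebra over a field k of characteristic zero, η : g → g a linear map of degree −1, μₙ the maps of Theorem 3.1, and R a local Artin k-algebra with maximal ideal m. Let γ₁,…,γ_N ∈ g¹ satisfy dγ_α = 0, let t¹,…,t^N ∈ m, and define Γ₁ = Σ_α t^α γ_α and, recursively, Γₙ = −½ η(Σ_{k=1}^{n−1} [Γₖ, Γ_{n−k}]) for n ≥ 2. Then Γ := Σ_{n≥1} Γₙ (a finite sum, since m is nilpotent) satisfies Γ + ½ η[Γ,Γ] = Γ₁, and Γ satisfies the L∞ Maurer–Cartan equation Σ_{k≥1} ((−1)^{k(k+1)/2}/k!) μₖ(Γ,…,Γ) = 0. -/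
open Finset
open scoped TensorProduct

noncomputable section

/-- The terms `Γₙ` of the versal power series: `Γ₁` given, and
`Γₙ = -½ η (∑_{j=1}^{n-1} [Γⱼ, Γ_{n-j}])` for `n ≥ 2`. -/
def kuranishiSeries {k : Type*} [Field k] {W : Type*} [AddCommGroup W] [Module k W]
    (br : W →ₗ[k] W →ₗ[k] W) (η : W →ₗ[k] W) (Γt : W) : ℕ → W
  | 0 => 0
  | 1 => Γt
  | (n + 2) =>
      (-(1 : k) / 2) • η (∑ j ∈ (Finset.Icc 1 (n + 1)).attach,
        br (kuranishiSeries br η Γt j.1) (kuranishiSeries br η Γt (n + 2 - j.1)))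
  termination_by n => n
  decreasing_by
  · have := Finset.mem_Icc.mp j.2; omega
  · have := Finset.mem_Icc.mp j.2; omega


/-! ### Auxiliary lemmas -/

private lemma aux_sign_eq_signAux {n : ℕ} (σ : Equiv.Perm (Fin n)) :
    Equiv.Perm.sign σ = Equiv.Perm.signAux σ := by
  refine Equiv.Perm.swap_induction_on σ ?_ ?_
  · simp [Equiv.Perm.signAux_one]
  · intro f x y hxy ih
    rw [Equiv.Perm.signAux_mul, Equiv.Perm.sign_mul, ih, Equiv.Perm.sign_swap hxy,
      Equiv.Perm.signAux_swap hxy]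

private lemma aux_signAux_eq_pow {n : ℕ} (σ : Equiv.Perm (Fin n)) :
    Equiv.Perm.signAux σ =
      (-1) ^ (Finset.univ.filter
        (fun p : Fin n × Fin n => p.1 < p.2 ∧ σ p.2 < σ p.1)).card := by
  unfold Equiv.Perm.signAux
  rw [Finset.prod_ite, Finset.prod_const, Finset.prod_const, one_pow, mul_one]
  congr 1
  apply Finset.card_nbij' (fun x => (x.2, x.1)) (fun p => ⟨p.2, p.1⟩)
  · intro a ha
    simp only [Finset.mem_coe, Finset.mem_filter, Finset.mem_univ, true_and,
      Equiv.Perm.mem_finPairsLT] at ha ⊢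
    exact ⟨ha.1, lt_of_le_of_ne ha.2 (fun h => ha.1.ne' (σ.injective h))⟩
  · intro p hp
    simp only [Finset.mem_coe, Finset.mem_filter, Finset.mem_univ, true_and,
      Equiv.Perm.mem_finPairsLT] at hp ⊢
    exact ⟨hp.1, hp.2.le⟩
  · intro a _; rfl
  · intro p _; rfl

private lemma aux_permSign_mul_koszulSign (k : Type*) [Field k] {n : ℕ}
    (σ : Equiv.Perm (Fin n)) :
    permSign k σ * koszulSign k (fun _ => (1 : ℤ)) σ = 1 := by
  have h1 : koszulSign k (fun _ => (1 : ℤ)) σ =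
      (-1 : k) ^ (Finset.univ.filter
        (fun p : Fin n × Fin n => p.1 < p.2 ∧ σ p.2 < σ p.1)).card := by
    unfold koszulSign
    rw [Finset.prod_const]
    norm_num
  have h2 : permSign k σ = (-1 : k) ^ (Finset.univ.filter
      (fun p : Fin n × Fin n => p.1 < p.2 ∧ σ p.2 < σ p.1)).card := by
    unfold permSign
    rw [aux_sign_eq_signAux, aux_signAux_eq_pow]
    push_cast
    norm_num
  rw [h1, h2, ← pow_add, ← two_mul, pow_mul]
  norm_num

private def aux_shufPerm {m : ℕ} (j : Fin (m + 1)) : Equiv.Perm (Fin (m + 1)) :=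
  (Fin.cycleRange j)⁻¹ * finRotate (m + 1)

private lemma aux_shufPerm_last {m : ℕ} (j : Fin (m + 1)) :
    aux_shufPerm j (Fin.last m) = j := by
  simp only [aux_shufPerm, Equiv.Perm.mul_apply, finRotate_last]
  rw [← Fin.cycleRange_self j]
  exact Equiv.symm_apply_apply _ _

private lemma aux_shufPerm_castSucc {m : ℕ} (j : Fin (m + 1)) (i : Fin m) :
    aux_shufPerm j (Fin.castSucc i) = j.succAbove i := by
  simp only [aux_shufPerm, Equiv.Perm.mul_apply, finRotate_succ_apply]
  have h1 : (Fin.castSucc i) + 1 = i.succ := by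
    ext; simp [Fin.val_add_one, Fin.castSucc_lt_last i |>.ne]
  rw [h1, ← Fin.cycleRange_succAbove j i]
  exact Equiv.symm_apply_apply _ _

private lemma aux_shufPerm_mem {m : ℕ} (j : Fin (m + 1)) :
    aux_shufPerm j ∈ shuffles m (m + 1) := by
  rw [shuffles, Finset.mem_filter]
  refine ⟨Finset.mem_univ _, ?_, ?_⟩
  · intro a b hab hbm
    have ha : (a : ℕ) < m := lt_trans hab hbm
    have h1 : a = Fin.castSucc ⟨(a : ℕ), ha⟩ := by ext; rfl
    have h2 : b = Fin.castSucc ⟨(b : ℕ), hbm⟩ := by ext; rfl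
    rw [h1, h2, aux_shufPerm_castSucc, aux_shufPerm_castSucc]
    exact Fin.strictMono_succAbove j (Fin.mk_lt_mk.mpr hab)
  · intro a b hab ha
    have := b.isLt
    omega

private lemma aux_shuffles_eq_shufPerm {m : ℕ} (σ : Equiv.Perm (Fin (m + 1)))
    (hσ : σ ∈ shuffles m (m + 1)) : σ = aux_shufPerm (σ (Fin.last m)) := by
  rw [shuffles, Finset.mem_filter] at hσ
  obtain ⟨-, h1, -⟩ := hσ
  set j := σ (Fin.last m) with hj
  have hsm : StrictMono (fun i : Fin m => σ (Fin.castSucc i)) := by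
    intro a b hab
    exact h1 (Fin.castSucc a) (Fin.castSucc b) hab b.isLt
  have hsm2 : StrictMono (j.succAbove) := Fin.strictMono_succAbove j
  have hrange : Set.range (fun i : Fin m => σ (Fin.castSucc i)) = Set.range j.succAbove := by
    rw [Fin.range_succAbove]
    ext x
    simp only [Set.mem_range, Set.mem_compl_iff, Set.mem_singleton_iff]
    constructor
    · rintro ⟨i, rfl⟩ h
      exact absurd (σ.injective h) (Fin.castSucc_lt_last i).ne
    · intro hx
      have hne : σ.symm x ≠ Fin.last m := by
        intro h
        apply hx
        rw [hj, ← h, Equiv.apply_symm_apply]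
      obtain ⟨i, hi⟩ := Fin.exists_castSucc_eq.mpr hne
      exact ⟨i, by rw [hi, Equiv.apply_symm_apply]⟩
  haveI hwf : WellFoundedLT (Fin m) := inferInstance
  have key : (fun i : Fin m => σ (Fin.castSucc i)) = j.succAbove :=
    @Set.range_injOn_strictMono (Fin m) (Fin (m + 1)) _ _ hwf _ hsm _ hsm2 hrange
  apply Equiv.ext
  intro x
  induction x using Fin.lastCases with
  | last => rw [aux_shufPerm_last]
  | cast i => rw [aux_shufPerm_castSucc]; exact congrFun key i

private lemma aux_card_shuffles (m : ℕ) : (shuffles m (m + 1)).card = m + 1 := by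
  have h : (shuffles m (m + 1)).card = (Finset.univ : Finset (Fin (m + 1))).card := by
    apply Finset.card_bij' (fun σ _ => σ (Fin.last m)) (fun j _ => aux_shufPerm j)
    · intro σ hσ; exact Finset.mem_univ _
    · intro j _; exact aux_shufPerm_mem j
    · intro σ hσ; exact (aux_shuffles_eq_shufPerm σ hσ).symm
    · intro j _; exact aux_shufPerm_last j
  rw [h, Finset.card_univ, Fintype.card_fin]

section AuxTensor

variable {k V R : Type*} [Field k] [AddCommGroup V] [Module k V] [CommRing R] [Algebra k R]

private lemma aux_tensorBracket_tmul (br : V →ₗ[k] V →ₗ[k] V) (v w : V) (r s : R) :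
    tensorBracket br (v ⊗ₜ[k] r) (w ⊗ₜ[k] s) = br v w ⊗ₜ[k] (r * s) := by
  simp [tensorBracket]

/-- the submodule `p ⊗ q` of `V ⊗ R`. -/
private def auxSp (p : Submodule k V) (q : Ideal R) : Submodule k (V ⊗[k] R) :=
  Submodule.span k {x | ∃ v r, v ∈ p ∧ r ∈ q ∧ x = v ⊗ₜ[k] r}

private lemma aux_tmul_mem_sp {p : Submodule k V} {q : Ideal R} {v : V} {r : R}
    (hv : v ∈ p) (hr : r ∈ q) : v ⊗ₜ[k] r ∈ auxSp p q :=
  Submodule.subset_span ⟨v, r, hv, hr, rfl⟩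

private lemma aux_sp_mono {p p' : Submodule k V} {q q' : Ideal R} (h1 : p ≤ p') (h2 : q ≤ q') :
    auxSp p q ≤ auxSp p' q' :=
  Submodule.span_mono (fun x ⟨v, r, hv, hr, hx⟩ => ⟨v, r, h1 hv, h2 hr, hx⟩)

private lemma aux_sp_bot (p : Submodule k V) : auxSp (R := R) p ⊥ = ⊥ := by
  rw [eq_bot_iff]
  refine Submodule.span_le.mpr ?_
  rintro x ⟨v, r, hv, hr, rfl⟩
  rw [Ideal.mem_bot] at hr
  simp [hr]

private lemma aux_map_mem_sp {f : V →ₗ[k] V} {p p' : Submodule k V} (hf : ∀ v ∈ p, f v ∈ p')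
    {q : Ideal R} {x : V ⊗[k] R} (hx : x ∈ auxSp p q) : f.rTensor R x ∈ auxSp p' q := by
  induction hx using Submodule.span_induction with
  | mem x h =>
    obtain ⟨v, r, hv, hr, rfl⟩ := h
    rw [LinearMap.rTensor_tmul]
    exact aux_tmul_mem_sp (hf v hv) hr
  | zero => simp
  | add x y _ _ hx hy => rw [map_add]; exact add_mem hx hy
  | smul c x _ hx => rw [map_smul]; exact Submodule.smul_mem _ _ hx

private lemma aux_bracket_mem_sp (br : V →ₗ[k] V →ₗ[k] V) {p p' p'' : Submodule k V}
    (hbr : ∀ v ∈ p, ∀ w ∈ p', br v w ∈ p'') {q q' : Ideal R} {x y : V ⊗[k] R}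
    (hx : x ∈ auxSp p q) (hy : y ∈ auxSp p' q') :
    tensorBracket br x y ∈ auxSp p'' (q * q') := by
  induction hx using Submodule.span_induction with
  | mem x h =>
    obtain ⟨v, r, hv, hr, rfl⟩ := h
    induction hy using Submodule.span_induction with
    | mem y h' =>
      obtain ⟨w, s, hw, hs, rfl⟩ := h'
      rw [aux_tensorBracket_tmul]
      exact aux_tmul_mem_sp (hbr v hv w hw) (Ideal.mul_mem_mul hr hs)
    | zero => rw [map_zero]; exact zero_mem _
    | add y1 y2 _ _ h1 h2 => rw [map_add]; exact add_mem h1 h2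
    | smul c y _ h1 => rw [map_smul]; exact Submodule.smul_mem _ _ h1
  | zero => rw [map_zero, LinearMap.zero_apply]; exact zero_mem _
  | add x1 x2 _ _ h1 h2 => rw [map_add, LinearMap.add_apply]; exact add_mem h1 h2
  | smul c x1 _ h1 => rw [map_smul, LinearMap.smul_apply]; exact Submodule.smul_mem _ _ h1

variable (D : GradedDGLA k V)

private lemma aux_leib_sp {i : ℤ} {q : Ideal R} {x : V ⊗[k] R}
    (hx : x ∈ auxSp (D.grade i) q) (y : V ⊗[k] R) :
    D.d.rTensor R (tensorBracket D.bracket x y)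
      = tensorBracket D.bracket (D.d.rTensor R x) y
        + ((-1 : k) ^ i) • tensorBracket D.bracket x (D.d.rTensor R y) := by
  induction hx using Submodule.span_induction with
  | mem x h =>
    obtain ⟨v, r, hv, hr, rfl⟩ := h
    induction y using TensorProduct.induction_on with
    | zero => simp
    | tmul w s =>
      simp only [LinearMap.rTensor_tmul, aux_tensorBracket_tmul]
      rw [D.leibniz i v w hv, TensorProduct.add_tmul, TensorProduct.smul_tmul']
    | add y1 y2 h1 h2 =>
      simp only [map_add, h1, h2, smul_add]
      abel
  | zero => simp
  | add x1 x2 _ _ h1 h2 =>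
    simp only [map_add, LinearMap.add_apply, h1, h2, smul_add]
    abel
  | smul c x1 _ h1 =>
    simp only [map_smul, LinearMap.smul_apply, h1, smul_add]
    rw [smul_comm c]

private lemma aux_antisymm_sp {i j : ℤ} {q q' : Ideal R} {x y : V ⊗[k] R}
    (hx : x ∈ auxSp (D.grade i) q) (hy : y ∈ auxSp (D.grade j) q') :
    tensorBracket D.bracket x y
      = -(((-1 : k) ^ (i * j)) • tensorBracket D.bracket y x) := by
  induction hx using Submodule.span_induction with
  | mem x h =>
    obtain ⟨v, r, hv, hr, rfl⟩ := h
    induction hy using Submodule.span_induction with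
    | mem y h' =>
      obtain ⟨w, s, hw, hs, rfl⟩ := h'
      rw [aux_tensorBracket_tmul, aux_tensorBracket_tmul, D.antisymm i j v w hv hw,
        mul_comm s r, TensorProduct.neg_tmul, TensorProduct.smul_tmul']
    | zero => simp
    | add y1 y2 _ _ h1 h2 => simp only [map_add, LinearMap.add_apply, h1, h2, smul_add]; abel
    | smul c y1 _ h1 =>
      simp only [map_smul, LinearMap.smul_apply, h1, smul_neg]
      rw [smul_comm c]
  | zero => simp
  | add x1 x2 _ _ h1 h2 => simp only [map_add, LinearMap.add_apply, h1, h2, smul_add]; abel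
  | smul c x1 _ h1 =>
    simp only [map_smul, LinearMap.smul_apply, h1, smul_neg]
    rw [smul_comm c]

end AuxTensor

private lemma aux_mcCoeff_rec (k : Type*) [Field k] [CharZero k] (n : ℕ) :
    mcCoeff k (n + 2) * ((-1 : k) ^ (n + 2) * ((n + 2 : ℕ) : k)) = mcCoeff k (n + 1) := by
  unfold mcCoeff
  have hfac : ((n + 2).factorial : k) = ((n + 2 : ℕ) : k) * ((n + 1).factorial : k) := by
    rw [Nat.factorial_succ]
    push_cast
    ring
  have hexp : (n + 2) * (n + 2 + 1) / 2 = (n + 1) * (n + 1 + 1) / 2 + (n + 2) := by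
    have h1 : (n + 2) * (n + 2 + 1) = (n + 1) * (n + 1 + 1) + (n + 2) * 2 := by ring
    have h2 : 2 ∣ (n + 1) * (n + 1 + 1) := (Nat.even_mul_succ_self (n + 1)).two_dvd
    omega
  have hsq : (-1 : k) ^ (n + 2) * (-1 : k) ^ (n + 2) = 1 := by
    rw [← pow_add, ← two_mul, pow_mul]
    norm_num
  have h2 : ((n + 2 : ℕ) : k) ≠ 0 := Nat.cast_ne_zero.mpr (by omega)
  have h3 : ((n + 1).factorial : k) ≠ 0 := Nat.cast_ne_zero.mpr (Nat.factorial_ne_zero _)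
  rw [hexp, pow_add, hfac]
  rw [div_mul_eq_mul_div]
  rw [show (-1 : k) ^ ((n + 1) * (n + 1 + 1) / 2) * (-1 : k) ^ (n + 2)
      * ((-1 : k) ^ (n + 2) * ((n + 2 : ℕ) : k))
      = ((-1 : k) ^ (n + 2) * (-1 : k) ^ (n + 2))
        * (((n + 2 : ℕ) : k) * (-1 : k) ^ ((n + 1) * (n + 1 + 1) / 2)) from by ring]
  rw [hsq, one_mul, mul_div_mul_left _ _ h2]

theorem statement5 {k V : Type*} [Field k] [CharZero k] [AddCommGroup V] [Module k V]
    (D : GradedDGLA k V) (η : V →ₗ[k] V)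
    (hη : ∀ (i : ℤ) (v : V), v ∈ D.grade i → η v ∈ D.grade (i - 1))
    (R : Type*) [CommRing R] [Algebra k R] [IsLocalRing R] [IsArtinianRing R]
    (N : ℕ) (hN : IsLocalRing.maximalIdeal R ^ N = ⊥)
    (M : ℕ) (γ : Fin M → V) (hγ : ∀ a, γ a ∈ D.grade 1) (hdγ : ∀ a, D.d (γ a) = 0)
    (t : Fin M → R) (ht : ∀ a, t a ∈ IsLocalRing.maximalIdeal R) :
    (∑ n ∈ Finset.Icc 1 N,
        kuranishiSeries (tensorBracket D.bracket) (LinearMap.rTensor R η)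
          (∑ a, γ a ⊗ₜ[k] t a) n)
      + (1 / 2 : k) • (LinearMap.rTensor R η)
          (tensorBracket D.bracket
            (∑ n ∈ Finset.Icc 1 N,
              kuranishiSeries (tensorBracket D.bracket) (LinearMap.rTensor R η)
                (∑ a, γ a ⊗ₜ[k] t a) n)
            (∑ n ∈ Finset.Icc 1 N,
              kuranishiSeries (tensorBracket D.bracket) (LinearMap.rTensor R η)
                (∑ a, γ a ⊗ₜ[k] t a) n))
      = ∑ a, γ a ⊗ₜ[k] t a
    ∧ (∑ n ∈ Finset.Icc 1 N, mcCoeff k n •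
          muRec (LinearMap.rTensor R D.d) (tensorBracket D.bracket) (LinearMap.rTensor R η)
            n (fun _ => (1 : ℤ))
            (fun _ => ∑ m ∈ Finset.Icc 1 N,
              kuranishiSeries (tensorBracket D.bracket) (LinearMap.rTensor R η)
                (∑ a, γ a ⊗ₜ[k] t a) m)) = 0 := by
  classical
  set mi := IsLocalRing.maximalIdeal R with hmi
  set Γt := ∑ a, γ a ⊗ₜ[k] t a with hΓt
  set br := tensorBracket (k := k) (V := V) (R := R) D.bracket with hbrdef
  set E := LinearMap.rTensor R η with hEdef
  set Dd := LinearMap.rTensor R D.d with hDddef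
  set G := kuranishiSeries br E Γt with hGdef
  set Γ := ∑ n ∈ Finset.Icc 1 N, G n with hΓ
  -- basic graded membership movers
  have hbrg : ∀ (a b : ℕ) (x y : V ⊗[k] R), x ∈ auxSp (D.grade 1) (mi ^ a) →
      y ∈ auxSp (D.grade 1) (mi ^ b) → br x y ∈ auxSp (D.grade 2) (mi ^ (a + b)) := by
    intro a b x y hx hy
    have h := aux_bracket_mem_sp D.bracket
      (fun v hv w hw => by simpa using D.bracket_grade 1 1 v w hv hw) hx hy
    rwa [← pow_add] at h
  have hbrg21 : ∀ (a b : ℕ) (x y : V ⊗[k] R), x ∈ auxSp (D.grade 2) (mi ^ a) →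
      y ∈ auxSp (D.grade 1) (mi ^ b) → br x y ∈ auxSp (D.grade 3) (mi ^ (a + b)) := by
    intro a b x y hx hy
    have h := aux_bracket_mem_sp D.bracket
      (fun v hv w hw => by simpa using D.bracket_grade 2 1 v w hv hw) hx hy
    rwa [← pow_add] at h
  have hE2 : ∀ (q : Ideal R) (x : V ⊗[k] R), x ∈ auxSp (D.grade 2) q →
      E x ∈ auxSp (D.grade 1) q := by
    intro q x hx
    have h := aux_map_mem_sp (f := η) (p := D.grade 2) (p' := D.grade 1)
      (fun v hv => by simpa using hη 2 v hv) hx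
    exact h
  have hE3 : ∀ (q : Ideal R) (x : V ⊗[k] R), x ∈ auxSp (D.grade 3) q →
      E x ∈ auxSp (D.grade 2) q := by
    intro q x hx
    exact aux_map_mem_sp (fun v hv => by simpa using hη 3 v hv) hx
  have hDd1 : ∀ (q : Ideal R) (x : V ⊗[k] R), x ∈ auxSp (D.grade 1) q →
      Dd x ∈ auxSp (D.grade 2) q := by
    intro q x hx
    exact aux_map_mem_sp (fun v hv => by simpa using D.d_grade 1 v hv) hx
  have hzero : ∀ (i : ℤ) (a : ℕ), N ≤ a → ∀ x : V ⊗[k] R,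
      x ∈ auxSp (D.grade i) (mi ^ a) → x = 0 := by
    intro i a ha x hx
    have h1 : auxSp (D.grade i) (mi ^ a) ≤ auxSp (D.grade i) (mi ^ N) :=
      aux_sp_mono le_rfl (Ideal.pow_le_pow_right ha)
    rw [hN, aux_sp_bot] at h1
    simpa using h1 hx
  -- kuranishi series equations
  have hG0 : G 0 = 0 := by rw [hGdef, kuranishiSeries]
  have hG1 : G 1 = Γt := by rw [hGdef, kuranishiSeries]
  have hG2 : ∀ n : ℕ, G (n + 2)
      = (-(1 : k) / 2) • E (∑ j ∈ Finset.Icc 1 (n + 1), br (G j) (G (n + 2 - j))) := by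
    intro n
    rw [hGdef, kuranishiSeries, ← hGdef,
      Finset.sum_attach (Finset.Icc 1 (n + 1)) (fun j => br (G j) (G (n + 2 - j)))]
  have hGmem : ∀ n : ℕ, G n ∈ auxSp (D.grade 1) (mi ^ n) := by
    intro n
    induction n using Nat.strong_induction_on with
    | _ n ih =>
      rcases n with _ | _ | n
      · rw [hG0]; exact zero_mem _
      · rw [hG1, hΓt]
        refine Submodule.sum_mem _ fun a _ => aux_tmul_mem_sp (hγ a) ?_
        simpa using ht a
      · rw [hG2 n]
        refine Submodule.smul_mem _ _ (hE2 _ _ (Submodule.sum_mem _ fun j hj => ?_))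
        have hj' := Finset.mem_Icc.mp hj
        have h := hbrg j (n + 2 - j) _ _ (ih j (by omega)) (ih (n + 2 - j) (by omega))
        rwa [show j + (n + 2 - j) = n + 2 by omega] at h
  -- the case N = 0
  rcases Nat.eq_zero_or_pos N with hN0 | hN1
  · have hIcc : Finset.Icc 1 N = ∅ := by
      rw [hN0]
      exact Finset.Icc_eq_empty (by omega)
    have hΓ0 : Γ = 0 := by rw [hΓ, hIcc, Finset.sum_empty]
    have htop : (⊤ : Ideal R) = ⊥ := by
      rw [← Ideal.one_eq_top, ← pow_zero mi, ← hN0]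
      exact hN
    have ht0 : ∀ a, t a = 0 := by
      intro a
      have : t a ∈ (⊥ : Ideal R) := htop ▸ Submodule.mem_top
      simpa using this
    have hΓt0 : Γt = 0 := by
      rw [hΓt]
      exact Finset.sum_eq_zero fun a _ => by rw [ht0 a, TensorProduct.tmul_zero]
    constructor
    · rw [hΓ0, hΓt0]
      simp
    · rw [hIcc, Finset.sum_empty]
  -- main case N ≥ 1
  have hΓmem : Γ ∈ auxSp (D.grade 1) (mi ^ 1) := by
    rw [hΓ]
    refine Submodule.sum_mem _ fun n hn => ?_
    exact aux_sp_mono le_rfl (Ideal.pow_le_pow_right (Finset.mem_Icc.mp hn).1) (hGmem n)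
  have hsplitIcc : Finset.Icc 1 N = insert 1 (Finset.Icc 2 N) := by
    ext x
    simp only [Finset.mem_Icc, Finset.mem_insert]
    omega
  have h1notin : (1 : ℕ) ∉ Finset.Icc 2 N := by simp
  set s := (Finset.Icc 1 N ×ˢ Finset.Icc 1 N).filter (fun p : ℕ × ℕ => p.1 + p.2 ≤ N)
    with hsdef
  have hbrΓΓ : br Γ Γ = ∑ p ∈ s, br (G p.1) (G p.2) := by
    have e1 : br Γ Γ = ∑ p ∈ Finset.Icc 1 N ×ˢ Finset.Icc 1 N, br (G p.1) (G p.2) := by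
      rw [Finset.sum_product, hΓ, map_sum br G, LinearMap.sum_apply]
      exact Finset.sum_congr rfl fun n _ => map_sum (br (G n)) G _
    rw [e1, ← Finset.sum_filter_add_sum_filter_not (Finset.Icc 1 N ×ˢ Finset.Icc 1 N)
      (fun p : ℕ × ℕ => p.1 + p.2 ≤ N), ← hsdef]
    have e2 : ∑ p ∈ (Finset.Icc 1 N ×ˢ Finset.Icc 1 N).filter
        (fun p : ℕ × ℕ => ¬ p.1 + p.2 ≤ N), br (G p.1) (G p.2) = 0 := by
      refine Finset.sum_eq_zero fun p hp => ?_
      have hp' := Finset.mem_filter.mp hp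
      exact hzero 2 (p.1 + p.2) (by omega) _ (hbrg p.1 p.2 _ _ (hGmem p.1) (hGmem p.2))
    rw [e2, add_zero]
  have hreindex : ∑ n ∈ Finset.Icc 2 N, ∑ j ∈ Finset.Icc 1 (n - 1), E (br (G j) (G (n - j)))
      = ∑ p ∈ s, E (br (G p.1) (G p.2)) := by
    rw [Finset.sum_sigma' (Finset.Icc 2 N) (fun n => Finset.Icc 1 (n - 1))
      (fun n j => E (br (G j) (G (n - j))))]
    refine Finset.sum_nbij' (fun x => (x.2, x.1 - x.2)) (fun p => ⟨p.1 + p.2, p.1⟩)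
      ?_ ?_ ?_ ?_ ?_
    · rintro ⟨n, j⟩ hx
      simp only [Finset.mem_sigma, Finset.mem_Icc] at hx
      simp only [hsdef, Finset.mem_filter, Finset.mem_product, Finset.mem_Icc]
      omega
    · rintro ⟨i, j⟩ hp
      simp only [hsdef, Finset.mem_filter, Finset.mem_product, Finset.mem_Icc] at hp
      simp only [Finset.mem_sigma, Finset.mem_Icc]
      omega
    · rintro ⟨n, j⟩ hx
      simp only [Finset.mem_sigma, Finset.mem_Icc] at hx
      simp only
      rw [show j + (n - j) = n from by omega]
    · rintro ⟨i, j⟩ hp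
      simp only [hsdef, Finset.mem_filter, Finset.mem_product, Finset.mem_Icc] at hp
      simp only
      rw [show i + j - i = j from by omega]
    · rintro ⟨n, j⟩ _
      rfl
  have hkey3 : ∑ n ∈ Finset.Icc 2 N, G n
      = (-(1 : k) / 2) • ∑ p ∈ s, E (br (G p.1) (G p.2)) := by
    have e3 : ∀ n ∈ Finset.Icc 2 N,
        G n = (-(1 : k) / 2) • ∑ j ∈ Finset.Icc 1 (n - 1), E (br (G j) (G (n - j))) := by
      intro n hn
      have hn2 := (Finset.mem_Icc.mp hn).1
      obtain ⟨n', rfl⟩ : ∃ n', n = n' + 2 := ⟨n - 2, by omega⟩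
      rw [show n' + 2 - 1 = n' + 1 from by omega, hG2 n', map_sum]
    rw [Finset.sum_congr rfl e3, ← Finset.smul_sum, hreindex]
  have hpart1 : Γ + (1 / 2 : k) • E (br Γ Γ) = Γt := by
    rw [hbrΓΓ, map_sum, hΓ, hsplitIcc, Finset.sum_insert h1notin, hG1, hkey3,
      add_assoc, ← add_smul]
    norm_num
  refine ⟨hpart1, ?_⟩
  have hfix : Γ = Γt - (1 / 2 : k) • E (br Γ Γ) := eq_sub_iff_add_eq.mpr hpart1
  have hDdΓt : Dd Γt = 0 := by
    rw [hΓt, map_sum]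
    refine Finset.sum_eq_zero fun a _ => ?_
    rw [hDddef, LinearMap.rTensor_tmul, hdγ a, TensorProduct.zero_tmul]
  have hDdΓ : Dd Γ = -((1 / 2 : k) • Dd (E (br Γ Γ))) := by
    conv_lhs => rw [hfix]
    rw [map_sub, hDdΓt, map_smul, zero_sub]
  have hBmem : br Γ Γ ∈ auxSp (D.grade 2) (mi ^ 2) := by
    have h := hbrg 1 1 _ _ hΓmem hΓmem
    norm_num at h
    exact h
  have hDdΓmem : Dd Γ ∈ auxSp (D.grade 2) (mi ^ 2) := by
    rw [hDdΓ]
    exact neg_mem (Submodule.smul_mem _ _ (hDd1 _ _ (hE2 _ _ hBmem)))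
  have hmu3 : ∀ n : ℕ, muRec Dd br E (n + 3) (fun _ => (1 : ℤ)) (fun _ => Γ)
      = ((-1 : k) ^ (n + 3) * ((n + 3 : ℕ) : k))
        • E (br (muRec Dd br E (n + 2) (fun _ => (1 : ℤ)) (fun _ => Γ)) Γ) := by
    intro n
    have h0 : muRec Dd br E (n + 3) (fun _ => (1 : ℤ)) (fun _ => Γ)
        = (-1 : k) ^ (n + 3) • ∑ σ ∈ shuffles (n + 2) (n + 3),
            (permSign k σ * koszulSign k (fun _ => (1 : ℤ)) σ)
              • E (br (muRec Dd br E (n + 2) (fun _ => (1 : ℤ)) (fun _ => Γ)) Γ) := rfl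
    rw [h0,
      Finset.sum_congr rfl (fun σ _ => by rw [aux_permSign_mul_koszulSign k σ, one_smul]),
      Finset.sum_const, aux_card_shuffles (n + 2), ← Nat.cast_smul_eq_nsmul k, smul_smul]
  have hanti : br Γ (Dd Γ) = -(br (Dd Γ) Γ) := by
    have h := aux_antisymm_sp D (i := 1) (j := 2) hΓmem hDdΓmem
    rw [← hbrdef] at h
    rwa [show ((1 : ℤ) * 2) = 2 from by norm_num,
      show ((-1 : k) ^ (2 : ℤ)) = 1 from by norm_num, one_smul] at h
  have hDdB : Dd (br Γ Γ) = (2 : k) • br (Dd Γ) Γ := by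
    have h := aux_leib_sp D (i := 1) (q := mi ^ 1) hΓmem Γ
    rw [← hbrdef, ← hDddef] at h
    rw [show ((-1 : k) ^ (1 : ℤ)) = -1 from by norm_num] at h
    rw [h, hanti, two_smul, neg_one_smul, neg_neg]
  have hSrec : ∀ n : ℕ, 1 ≤ n →
      (∑ j ∈ Finset.Icc 1 (n + 1),
          mcCoeff k j • muRec Dd br E j (fun _ => (1 : ℤ)) (fun _ => Γ))
        = E (br (∑ j ∈ Finset.Icc 1 n, mcCoeff k j
            • muRec Dd br E j (fun _ => (1 : ℤ)) (fun _ => Γ)) Γ) := by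
    intro n hn
    induction n, hn using Nat.le_induction with
    | base =>
      have hI2 : Finset.Icc 1 (1 + 1) = {1, 2} := by decide
      have hI1 : Finset.Icc 1 1 = {1} := by decide
      rw [hI2, hI1, Finset.sum_pair (by norm_num), Finset.sum_singleton]
      have hm1 : muRec Dd br E 1 (fun _ => (1 : ℤ)) (fun _ => Γ) = Dd Γ := rfl
      have hm2 : muRec Dd br E 2 (fun _ => (1 : ℤ)) (fun _ => Γ)
          = Dd (E (br Γ Γ)) + E (Dd (br Γ Γ)) := rfl
      have hc1 : mcCoeff k 1 = -1 := by norm_num [mcCoeff, Nat.factorial]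
      have hc2 : mcCoeff k 2 = -(1 / 2 : k) := by norm_num [mcCoeff, Nat.factorial]
      rw [hm1, hm2, hc1, hc2, hDdB, hDdΓ]
      simp only [map_add, map_smul, map_neg, LinearMap.add_apply, LinearMap.smul_apply,
        LinearMap.neg_apply, smul_add, smul_neg, smul_smul, neg_smul, one_smul, neg_neg]
      module
    | succ n hn ih =>
      rw [Finset.sum_Icc_succ_top (by omega : (1 : ℕ) ≤ n + 1 + 1)]
      conv_lhs => rw [ih]
      obtain ⟨n', rfl⟩ : ∃ n', n = n' + 1 := ⟨n - 1, by omega⟩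
      have hm := hmu3 n'
      rw [show n' + 3 = n' + 1 + 1 + 1 from by omega,
        show n' + 2 = n' + 1 + 1 from by omega] at hm
      have hco := aux_mcCoeff_rec k (n' + 1)
      rw [show n' + 1 + 2 = n' + 1 + 1 + 1 from by omega] at hco
      rw [hm, smul_smul, hco]
      rw [Finset.sum_Icc_succ_top (by omega : (1 : ℕ) ≤ n' + 1 + 1), map_add br,
        LinearMap.add_apply, map_add, map_smul br, LinearMap.smul_apply, map_smul]
  have hSmem : ∀ n : ℕ, 1 ≤ n →
      (∑ j ∈ Finset.Icc 1 n,
          mcCoeff k j • muRec Dd br E j (fun _ => (1 : ℤ)) (fun _ => Γ))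
        ∈ auxSp (D.grade 2) (mi ^ (n + 1)) := by
    intro n hn
    induction n, hn using Nat.le_induction with
    | base =>
      have hI1 : Finset.Icc 1 1 = {1} := by decide
      rw [hI1, Finset.sum_singleton]
      have hm1 : muRec Dd br E 1 (fun _ => (1 : ℤ)) (fun _ => Γ) = Dd Γ := rfl
      rw [hm1]
      exact Submodule.smul_mem _ _ hDdΓmem
    | succ n hn ih =>
      rw [hSrec n hn]
      have h := hE3 _ _ (hbrg21 (n + 1) 1 _ _ ih hΓmem)
      rwa [show n + 1 + 1 = n + 1 + 1 from rfl] at h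
  exact hzero 2 (N + 1) (by omega) _ (hSmem N hN1)
end
end
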